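/- arXiv:1002.4641 — 5 statements merged into one kernel-verified Lean document; each statement's English description precedes it below -/
import Mathlib

section
/- Let B and S be finite sets of buyers and sellers with nonnegative demand D : B → ℝ and supply Sup : S → ℝ, and let the link relation be complete (every buyer is linked to every seller). Suppose ∑_b D b = ∑_s Sup s. Then for every trading session (any sequence performing one trade on each link, each link used at most once, in any order, where a trade on link (b,s) transfers min of the current demand of b and current supply of s), the final demand of every buyer is zero. -/
open scoped Classical

/-- A trading state: current demands of buyers and supplies of sellers. -/
structure TState (B S : Type*) where
  dem : B → ℝ
  sup : S → ℝ

/-- One trade on link `(b, s)`: the maximal amount `min (dem b) (sup s)` is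
transferred, leaving demand `max 0 (dem b - sup s)` and supply
`max 0 (sup s - dem b)`; all other values are unchanged. -/
def trade {B S : Type*} [DecidableEq B] [DecidableEq S]
    (st : TState B S) (l : B × S) : TState B S where
  dem := Function.update st.dem l.1 (max 0 (st.dem l.1 - st.sup l.2))
  sup := Function.update st.sup l.2 (max 0 (st.sup l.2 - st.dem l.1))

/-- Execute a sequence of trades in order. -/
def runSession {B S : Type*} [DecidableEq B] [DecidableEq S]
    (st : TState B S) (seq : List (B × S)) : TState B S :=
  seq.foldl trade st

/-- The bipartite graph on `B ⊕ S` induced by the link set `L`. -/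
def linkGraph {B S : Type*} (L : Finset (B × S)) : SimpleGraph (B ⊕ S) where
  Adj v w := ∃ p ∈ L, (v = Sum.inl p.1 ∧ w = Sum.inr p.2) ∨ (v = Sum.inr p.2 ∧ w = Sum.inl p.1)
  symm := ⟨by rintro v w ⟨p, hp, h | h⟩ <;> exact ⟨p, hp, by tauto⟩⟩
  loopless := ⟨by rintro v ⟨p, hp, ⟨rfl, h⟩ | ⟨rfl, h⟩⟩ <;> simp_all⟩

section Aux
variable {B S : Type*} [DecidableEq B] [DecidableEq S] [Fintype B] [Fintype S]

lemma sum_update {ι : Type*} [Fintype ι] [DecidableEq ι] (f : ι → ℝ) (i : ι) (a : ℝ) :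
    ∑ b, Function.update f i a b = ∑ b, f b + (a - f i) := by
  have h1 := Finset.sum_update_of_mem (Finset.mem_univ i) f a
  have h2 := Finset.sum_update_of_mem (Finset.mem_univ i) f (f i)
  rw [Function.update_eq_self] at h2
  rw [h1, h2]; ring

lemma trade_props (st : TState B S) (l : B × S)
    (hd : ∀ b, 0 ≤ st.dem b) (hs : ∀ s, 0 ≤ st.sup s) :
    (∀ b, 0 ≤ (trade st l).dem b) ∧ (∀ s, 0 ≤ (trade st l).sup s) ∧
    (∀ b, (trade st l).dem b ≤ st.dem b) ∧ (∀ s, (trade st l).sup s ≤ st.sup s) ∧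
    (∑ b, (trade st l).dem b - ∑ s, (trade st l).sup s
      = ∑ b, st.dem b - ∑ s, st.sup s) := by
  refine ⟨?_, ?_, ?_, ?_, ?_⟩
  · intro b; rcases eq_or_ne b l.1 with rfl | h
    · simp [trade]
    · simp [trade, Function.update_of_ne h, hd b]
  · intro s; rcases eq_or_ne s l.2 with rfl | h
    · simp [trade]
    · simp [trade, Function.update_of_ne h, hs s]
  · intro b; rcases eq_or_ne b l.1 with rfl | h
    · simp only [trade, Function.update_self]
      exact max_le (hd l.1) (by linarith [hs l.2])
    · simp [trade, Function.update_of_ne h]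
  · intro s; rcases eq_or_ne s l.2 with rfl | h
    · simp only [trade, Function.update_self]
      exact max_le (hs l.2) (by linarith [hd l.1])
    · simp [trade, Function.update_of_ne h]
  · simp only [trade, sum_update]
    rcases le_total (st.dem l.1) (st.sup l.2) with h | h
    · rw [max_eq_left (by linarith), max_eq_right (by linarith)]; ring
    · rw [max_eq_right (by linarith), max_eq_left (by linarith)]; ring

lemma run_props (seq : List (B × S)) : ∀ st : TState B S,
    (∀ b, 0 ≤ st.dem b) → (∀ s, 0 ≤ st.sup s) →
    (∀ b, 0 ≤ (runSession st seq).dem b) ∧ (∀ s, 0 ≤ (runSession st seq).sup s) ∧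
    (∀ b, (runSession st seq).dem b ≤ st.dem b) ∧
    (∀ s, (runSession st seq).sup s ≤ st.sup s) ∧
    (∑ b, (runSession st seq).dem b - ∑ s, (runSession st seq).sup s
      = ∑ b, st.dem b - ∑ s, st.sup s) := by
  induction seq with
  | nil => intro st hd hs; exact ⟨hd, hs, fun _ => le_rfl, fun _ => le_rfl, rfl⟩
  | cons l rest ih =>
    intro st hd hs
    obtain ⟨td, ts, tdl, tsl, tb⟩ := trade_props st l hd hs
    obtain ⟨rd, rs, rdl, rsl, rb⟩ := ih (trade st l) td ts
    have heq : runSession st (l :: rest) = runSession (trade st l) rest := rfl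
    rw [heq]
    exact ⟨rd, rs, fun b => (rdl b).trans (tdl b), fun s => (rsl s).trans (tsl s),
      by rw [rb, tb]⟩

lemma run_min_zero (st : TState B S) (pre post : List (B × S)) (l : B × S)
    (hd : ∀ b, 0 ≤ st.dem b) (hs : ∀ s, 0 ≤ st.sup s) :
    min ((runSession st (pre ++ l :: post)).dem l.1)
        ((runSession st (pre ++ l :: post)).sup l.2) = 0 := by
  have heq : runSession st (pre ++ l :: post)
      = runSession (trade (runSession st pre) l) post := by
    simp [runSession, List.foldl_append]
  set st1 := runSession st pre with hst1
  obtain ⟨pd, ps, _, _, _⟩ := run_props pre st hd hs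
  have td : ∀ b, 0 ≤ (trade st1 l).dem b := (trade_props st1 l pd ps).1
  have ts : ∀ s, 0 ≤ (trade st1 l).sup s := (trade_props st1 l pd ps).2.1
  obtain ⟨fd, fs, fdl, fsl, _⟩ := run_props post (trade st1 l) td ts
  have hmin : min ((trade st1 l).dem l.1) ((trade st1 l).sup l.2) = 0 := by
    simp only [trade, Function.update_self]
    rcases le_total (st1.dem l.1) (st1.sup l.2) with h | h
    · rw [max_eq_left (by linarith : st1.dem l.1 - st1.sup l.2 ≤ 0)]
      exact min_eq_left (le_max_left _ _)
    · rw [max_eq_left (by linarith : st1.sup l.2 - st1.dem l.1 ≤ 0)]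
      exact min_eq_right (le_max_left _ _)
  rw [heq]
  refine le_antisymm ?_ (le_min (fd l.1) (fs l.2))
  calc min ((runSession (trade st1 l) post).dem l.1)
        ((runSession (trade st1 l) post).sup l.2)
      ≤ min ((trade st1 l).dem l.1) ((trade st1 l).sup l.2) :=
        min_le_min (fdl l.1) (fsl l.2)
    _ = 0 := hmin

end Aux

/-- On the complete bipartite graph with total supply equal to total demand,
every trading session (every ordering of all the links, each used once)
reduces every buyer's demand to zero. -/
theorem stmt_4 {B S : Type*} [Fintype B] [Fintype S] [DecidableEq B] [DecidableEq S]
    (D : B → ℝ) (Sup : S → ℝ) (hD : ∀ b, 0 ≤ D b) (hS : ∀ s, 0 ≤ Sup s)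
    (hbal : ∑ b, D b = ∑ s, Sup s)
    (seq : List (B × S))
    (hseq : seq.Perm (Finset.univ ×ˢ Finset.univ : Finset (B × S)).toList) :
    ∀ b, (runSession ⟨D, Sup⟩ seq).dem b = 0 := by
  set st0 : TState B S := ⟨D, Sup⟩ with hst0
  set F := runSession st0 seq with hF
  obtain ⟨fd, fs, _, _, fb⟩ := run_props seq st0 hD hS
  have hbal' : ∑ b, F.dem b = ∑ s, F.sup s := by
    have : ∑ b, st0.dem b - ∑ s, st0.sup s = 0 := by
      simp [hst0, hbal]
    rw [← hF] at fb; linarith [fb]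
  have hmin : ∀ (b : B) (s : S), min (F.dem b) (F.sup s) = 0 := by
    intro b s
    have hmem : (b, s) ∈ seq := by
      rw [hseq.mem_iff, Finset.mem_toList, Finset.mem_product]
      exact ⟨Finset.mem_univ _, Finset.mem_univ _⟩
    obtain ⟨pre, post, rfl⟩ := List.append_of_mem hmem
    exact run_min_zero st0 pre post (b, s) hD hS
  intro b
  by_contra hb
  have hb' : 0 < F.dem b := lt_of_le_of_ne (fd b) (Ne.symm hb)
  have hsup : ∀ s, F.sup s = 0 := by
    intro s
    have := hmin b s
    rcases min_cases (F.dem b) (F.sup s) with ⟨h1, _⟩ | ⟨h1, _⟩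
    · linarith [h1 ▸ this]
    · linarith [h1 ▸ this]
  have : ∑ b, F.dem b = 0 := by
    rw [hbal']; exact Finset.sum_eq_zero fun s _ => hsup s
  have := (Finset.sum_eq_zero_iff_of_nonneg (fun b _ => fd b)).1 this b (Finset.mem_univ b)
  exact hb this
end

section
/- Let G be a bipartite graph on finite buyer set B and seller set S with strictly positive demands D : B → ℝ>0 and supplies Sup : S → ℝ>0 such that within every connected component the total supply equals the total demand. If every trading session on G is feasible (reduces all demands to zero), then every connected component of G is a complete bipartite graph (every buyer in the component is linked to every seller in the component). -/
set_option linter.unusedSectionVars false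
set_option maxHeartbeats 1000000


open scoped Classical

namespace StmtFive

open Sum Finset SimpleGraph

variable {B S : Type*} [Fintype B] [Fintype S] [DecidableEq B] [DecidableEq S]

/-! ### basic trade lemmas -/

def Nonneg (st : TState B S) : Prop := (∀ b, 0 ≤ st.dem b) ∧ (∀ s, 0 ≤ st.sup s)

lemma trade_dem_self (st : TState B S) (l : B × S) :
    (trade st l).dem l.1 = max 0 (st.dem l.1 - st.sup l.2) := by simp [trade]

lemma trade_dem_ne (st : TState B S) (l : B × S) {b : B} (h : b ≠ l.1) :
    (trade st l).dem b = st.dem b := by simp [trade, Function.update_of_ne h]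

lemma trade_sup_self (st : TState B S) (l : B × S) :
    (trade st l).sup l.2 = max 0 (st.sup l.2 - st.dem l.1) := by simp [trade]

lemma trade_sup_ne (st : TState B S) (l : B × S) {s : S} (h : s ≠ l.2) :
    (trade st l).sup s = st.sup s := by simp [trade, Function.update_of_ne h]

lemma nonneg_trade {st : TState B S} (h : Nonneg st) (l : B × S) : Nonneg (trade st l) := by
  constructor
  · intro b
    by_cases hb : b = l.1
    · subst hb; rw [trade_dem_self]; exact le_max_left _ _
    · rw [trade_dem_ne _ _ hb]; exact h.1 b
  · intro s
    by_cases hs : s = l.2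
    · subst hs; rw [trade_sup_self]; exact le_max_left _ _
    · rw [trade_sup_ne _ _ hs]; exact h.2 s

lemma run_nil (st : TState B S) : runSession st [] = st := rfl

lemma run_cons (st : TState B S) (l : B × S) (t : List (B × S)) :
    runSession st (l :: t) = runSession (trade st l) t := rfl

lemma run_append (st : TState B S) (l₁ l₂ : List (B × S)) :
    runSession st (l₁ ++ l₂) = runSession (runSession st l₁) l₂ := List.foldl_append

lemma nonneg_run {st : TState B S} (h : Nonneg st) (seq : List (B × S)) :
    Nonneg (runSession st seq) := by
  induction seq generalizing st with
  | nil => exact h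
  | cons l t ih => rw [run_cons]; exact ih (nonneg_trade h l)

lemma tstate_eq {st₁ st₂ : TState B S} (h1 : st₁.dem = st₂.dem) (h2 : st₁.sup = st₂.sup) :
    st₁ = st₂ := by cases st₁; cases st₂; simp_all

lemma trade_noop {st : TState B S} (hnn : Nonneg st) {l : B × S}
    (h : st.dem l.1 = 0 ∨ st.sup l.2 = 0) : trade st l = st := by
  apply tstate_eq
  · funext x
    by_cases hx : x = l.1
    · subst hx
      rw [trade_dem_self]
      rcases h with h | h
      · rw [h]; have := hnn.2 l.2; rw [max_eq_left (by linarith)]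
      · rw [h]; have := hnn.1 l.1; rw [sub_zero, max_eq_right (by linarith)]
    · rw [trade_dem_ne _ _ hx]
  · funext y
    by_cases hy : y = l.2
    · subst hy
      rw [trade_sup_self]
      rcases h with h | h
      · rw [h]; have := hnn.2 l.2; rw [sub_zero, max_eq_right (by linarith)]
      · rw [h]; have := hnn.1 l.1; rw [max_eq_left (by linarith)]
    · rw [trade_sup_ne _ _ hy]

lemma run_noop {st : TState B S} (hnn : Nonneg st) {seq : List (B × S)}
    (h : ∀ l ∈ seq, st.dem l.1 = 0 ∨ st.sup l.2 = 0) : runSession st seq = st := by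
  induction seq with
  | nil => rfl
  | cons l t ih =>
    rw [run_cons, trade_noop hnn (h l (List.mem_cons_self))]
    exact ih fun p hp => h p (List.mem_cons_of_mem _ hp)

lemma dem_zero_persist {st : TState B S} (hnn : Nonneg st) (seq : List (B × S)) {b : B}
    (h : st.dem b = 0) : (runSession st seq).dem b = 0 := by
  induction seq generalizing st with
  | nil => exact h
  | cons l t ih =>
    rw [run_cons]
    apply ih (nonneg_trade hnn l)
    by_cases hb : b = l.1
    · subst hb; rw [trade_dem_self, h]; have := hnn.2 l.2; rw [max_eq_left (by linarith)]
    · rw [trade_dem_ne _ _ hb]; exact h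

lemma sup_zero_persist {st : TState B S} (hnn : Nonneg st) (seq : List (B × S)) {s : S}
    (h : st.sup s = 0) : (runSession st seq).sup s = 0 := by
  induction seq generalizing st with
  | nil => exact h
  | cons l t ih =>
    rw [run_cons]
    apply ih (nonneg_trade hnn l)
    by_cases hs : s = l.2
    · subst hs; rw [trade_sup_self, h]; have := hnn.1 l.1; rw [max_eq_left (by linarith)]
    · rw [trade_sup_ne _ _ hs]; exact h

lemma dem_untouched {st : TState B S} {seq : List (B × S)} {b : B}
    (h : ∀ l ∈ seq, l.1 ≠ b) : (runSession st seq).dem b = st.dem b := by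
  induction seq generalizing st with
  | nil => rfl
  | cons l t ih =>
    rw [run_cons, ih fun p hp => h p (List.mem_cons_of_mem _ hp)]
    exact trade_dem_ne _ _ fun hb => (h l (List.mem_cons_self)) hb.symm

/-! ### Good instances -/

structure Good (L : Finset (B × S)) (st : TState B S) : Prop where
  nn : Nonneg st
  pos : ∀ p ∈ L, 0 < st.dem p.1 ∧ 0 < st.sup p.2
  bal : ∑ x, st.dem x = ∑ y, st.sup y
  succ : ∀ seq : List (B × S), seq.Perm L.toList → ∀ b, (runSession st seq).dem b = 0

lemma phi_trade {CB : Finset B} {CS : Finset S} {st : TState B S} {l : B × S}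
    (hnn : Nonneg st) (hcl : l.1 ∈ CB ↔ l.2 ∈ CS) :
    (∑ x ∈ CB, (trade st l).dem x) - (∑ y ∈ CS, (trade st l).sup y)
      = (∑ x ∈ CB, st.dem x) - (∑ y ∈ CS, st.sup y) := by
  by_cases h1 : l.1 ∈ CB
  · have h2 : l.2 ∈ CS := hcl.mp h1
    have hd : (∑ x ∈ CB, (trade st l).dem x)
        = max 0 (st.dem l.1 - st.sup l.2) + ∑ x ∈ CB.erase l.1, st.dem x := by
      rw [show (trade st l).dem = Function.update st.dem l.1 (max 0 (st.dem l.1 - st.sup l.2)) from rfl]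
      rw [Finset.sum_update_of_mem h1, ← Finset.erase_eq]
    have hs : (∑ y ∈ CS, (trade st l).sup y)
        = max 0 (st.sup l.2 - st.dem l.1) + ∑ y ∈ CS.erase l.2, st.sup y := by
      rw [show (trade st l).sup = Function.update st.sup l.2 (max 0 (st.sup l.2 - st.dem l.1)) from rfl]
      rw [Finset.sum_update_of_mem h2, ← Finset.erase_eq]
    rw [hd, hs, ← Finset.add_sum_erase _ st.dem h1, ← Finset.add_sum_erase _ st.sup h2]
    have hD := hnn.1 l.1
    have hS := hnn.2 l.2
    rcases le_total (st.dem l.1) (st.sup l.2) with h | h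
    · rw [max_eq_left (by linarith), max_eq_right (by linarith)]; ring
    · rw [max_eq_right (by linarith), max_eq_left (by linarith)]; ring
  · have h2 : l.2 ∉ CS := fun h => h1 (hcl.mpr h)
    have hd : (∑ x ∈ CB, (trade st l).dem x) = ∑ x ∈ CB, st.dem x :=
      Finset.sum_congr rfl fun x hx => trade_dem_ne _ _ (by rintro rfl; exact h1 hx)
    have hs : (∑ y ∈ CS, (trade st l).sup y) = ∑ y ∈ CS, st.sup y :=
      Finset.sum_congr rfl fun y hy => trade_sup_ne _ _ (by rintro rfl; exact h2 hy)
    rw [hd, hs]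

lemma phi_run {CB : Finset B} {CS : Finset S} {st : TState B S} {seq : List (B × S)}
    (hcl : ∀ l ∈ seq, (l.1 ∈ CB ↔ l.2 ∈ CS)) (hnn : Nonneg st) :
    (∑ x ∈ CB, (runSession st seq).dem x) - (∑ y ∈ CS, (runSession st seq).sup y)
      = (∑ x ∈ CB, st.dem x) - (∑ y ∈ CS, st.sup y) := by
  induction seq generalizing st with
  | nil => rfl
  | cons l t ih =>
    rw [run_cons, ih (fun p hp => hcl p (List.mem_cons_of_mem _ hp)) (nonneg_trade hnn l)]
    exact phi_trade hnn (hcl l (List.mem_cons_self))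

lemma bal_closed {L : Finset (B × S)} {st : TState B S} (hG : Good L st)
    {CB : Finset B} {CS : Finset S} (hcl : ∀ p ∈ L, (p.1 ∈ CB ↔ p.2 ∈ CS)) :
    ∑ x ∈ CB, st.dem x = ∑ y ∈ CS, st.sup y := by
  set F := runSession st L.toList with hF
  have hFd : ∀ b, F.dem b = 0 := hG.succ L.toList (List.Perm.refl _)
  have hnnF : Nonneg F := nonneg_run hG.nn _
  have hglob := phi_run (CB := (univ : Finset B)) (CS := (univ : Finset S))
    (st := st) (seq := L.toList) (fun l _ => by simp) hG.nn
  have hFs : ∀ y, F.sup y = 0 := by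
    have hsum : ∑ y, F.sup y = 0 := by
      have h0 : ∑ x, F.dem x = 0 := Finset.sum_eq_zero fun x _ => hFd x
      have := hG.bal
      rw [h0] at hglob; linarith
    intro y
    exact (Finset.sum_eq_zero_iff_of_nonneg fun y _ => hnnF.2 y).mp hsum y (mem_univ _)
  have hΦ := phi_run (CB := CB) (CS := CS) (st := st) (seq := L.toList)
    (fun l hl => hcl l (Finset.mem_toList.mp hl)) hG.nn
  have h0 : ∑ x ∈ CB, F.dem x = 0 := Finset.sum_eq_zero fun x _ => hFd x
  have h1 : ∑ y ∈ CS, F.sup y = 0 := Finset.sum_eq_zero fun y _ => hFs y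
  rw [h0, h1] at hΦ; linarith

/-! ### prefix reduction -/

noncomputable def aliveL (L : Finset (B × S)) (π : List (B × S)) (st' : TState B S) :
    Finset (B × S) :=
  (L \ π.toFinset).filter fun p => 0 < st'.dem p.1 ∧ 0 < st'.sup p.2

lemma mem_aliveL {L : Finset (B × S)} {π : List (B × S)} {st' : TState B S} {p : B × S} :
    p ∈ aliveL L π st' ↔ (p ∈ L ∧ p ∉ π.toFinset) ∧ (0 < st'.dem p.1 ∧ 0 < st'.sup p.2) := by
  simp [aliveL, Finset.mem_filter, Finset.mem_sdiff]

lemma aliveL_subset {L : Finset (B × S)} {π : List (B × S)} {st' : TState B S} :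
    aliveL L π st' ⊆ L := fun p hp => (mem_aliveL.mp hp).1.1

lemma card_aliveL {L : Finset (B × S)} {π : List (B × S)} {st' : TState B S} {q : B × S}
    (hq : q ∈ L) (hqπ : q ∈ π) : (aliveL L π st').card + 1 ≤ L.card := by
  have hsub : aliveL L π st' ⊆ L.erase q := by
    intro p hp
    obtain ⟨⟨hpL, hpπ⟩, _⟩ := mem_aliveL.mp hp
    exact Finset.mem_erase.mpr ⟨fun h => hpπ (h ▸ List.mem_toFinset.mpr hqπ), hpL⟩
  have h1 := Finset.card_le_card hsub
  have h2 := Finset.card_erase_of_mem hq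
  have h3 : 1 ≤ L.card := Finset.card_pos.mpr ⟨q, hq⟩
  omega

lemma good_prefix {L : Finset (B × S)} {st : TState B S} (hG : Good L st)
    (π : List (B × S)) (hπ : ∀ p ∈ π, p ∈ L) (hnd : π.Nodup) :
    Good (aliveL L π (runSession st π)) (runSession st π) := by
  set st' := runSession st π with hst'
  have hnn' : Nonneg st' := nonneg_run hG.nn π
  refine ⟨hnn', ?_, ?_, ?_⟩
  · intro p hp; exact (mem_aliveL.mp hp).2
  · have := phi_run (CB := (univ : Finset B)) (CS := (univ : Finset S))
      (st := st) (seq := π) (fun l _ => by simp) hG.nn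
    have hb := hG.bal
    linarith
  · intro σ hσ b
    set M := L \ π.toFinset with hM
    set A := aliveL L π st' with hA
    set rest := (M \ A).toList with hrest
    have hMA : A ⊆ M := Finset.filter_subset _ _
    have hmemσ : ∀ p, p ∈ σ ↔ p ∈ A := fun p => by
      rw [hσ.mem_iff, Finset.mem_toList]
    have hperm : (π ++ (σ ++ rest)).Perm L.toList := by
      apply List.perm_of_nodup_nodup_toFinset_eq
      · refine List.Nodup.append hnd (List.Nodup.append ?_ (Finset.nodup_toList _) ?_) ?_
        · exact hσ.nodup_iff.mpr (Finset.nodup_toList _)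
        · intro a ha hr
          have haA : a ∈ A := (hmemσ a).mp ha
          have : a ∈ M \ A := Finset.mem_toList.mp hr
          exact (Finset.mem_sdiff.mp this).2 haA
        · intro a ha hmem
          have haπ : a ∈ π.toFinset := List.mem_toFinset.mpr ha
          rcases List.mem_append.mp hmem with h | h
          · have : a ∈ M := hMA ((hmemσ a).mp h)
            exact (Finset.mem_sdiff.mp this).2 haπ
          · have : a ∈ M \ A := Finset.mem_toList.mp h
            exact (Finset.mem_sdiff.mp ((Finset.mem_sdiff.mp this).1)).2 haπ
      · exact Finset.nodup_toList _
      · rw [List.toFinset_append, List.toFinset_append, List.toFinset_eq_of_perm _ _ hσ,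
          Finset.toList_toFinset, Finset.toList_toFinset, Finset.toList_toFinset]
        rw [Finset.union_sdiff_of_subset hMA]
        exact Finset.union_sdiff_of_subset fun p hp => hπ p (List.mem_toFinset.mp hp)
    have hzero := hG.succ _ hperm b
    rw [run_append, run_append] at hzero
    rw [← hst'] at hzero
    have hnoop : runSession (runSession st' σ) rest = runSession st' σ := by
      apply run_noop (nonneg_run hnn' σ)
      intro l hl
      have hlM : l ∈ M \ A := Finset.mem_toList.mp hl
      have hnot : ¬(0 < st'.dem l.1 ∧ 0 < st'.sup l.2) := by
        intro hcon
        exact (Finset.mem_sdiff.mp hlM).2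
          (mem_aliveL.mpr ⟨Finset.mem_sdiff.mp (Finset.mem_sdiff.mp hlM).1, hcon⟩)
      rcases not_and_or.mp hnot with h | h
      · exact Or.inl (dem_zero_persist hnn' σ (le_antisymm (not_lt.mp h) (hnn'.1 _)))
      · exact Or.inr (sup_zero_persist hnn' σ (le_antisymm (not_lt.mp h) (hnn'.2 _)))
    rw [hnoop] at hzero
    exact hzero



/-! ### graph lemmas -/

lemma adj_of_mem {L : Finset (B × S)} {p : B × S} (hp : p ∈ L) :
    (linkGraph L).Adj (inl p.1) (inr p.2) := ⟨p, hp, Or.inl ⟨rfl, rfl⟩⟩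

lemma adj_of_mem' {L : Finset (B × S)} {b : B} {s : S} (hp : (b, s) ∈ L) :
    (linkGraph L).Adj (inl b) (inr s) := ⟨(b, s), hp, Or.inl ⟨rfl, rfl⟩⟩

lemma adj_inl {L : Finset (B × S)} {b : B} {w : B ⊕ S}
    (h : (linkGraph L).Adj (inl b) w) : ∃ p ∈ L, p.1 = b ∧ w = inr p.2 := by
  obtain ⟨p, hp, ⟨h1, h2⟩ | ⟨h1, h2⟩⟩ := h
  · exact ⟨p, hp, (Sum.inl.injEq _ _ ▸ h1).symm, h2⟩
  · exact absurd h1 (by simp)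

lemma adj_inr {L : Finset (B × S)} {s : S} {w : B ⊕ S}
    (h : (linkGraph L).Adj (inr s) w) : ∃ p ∈ L, p.2 = s ∧ w = inl p.1 := by
  obtain ⟨p, hp, ⟨h1, h2⟩ | ⟨h1, h2⟩⟩ := h
  · exact absurd h1 (by simp)
  · exact ⟨p, hp, (Sum.inr.injEq _ _ ▸ h1).symm, h2⟩

lemma reach_buyer_edge {L : Finset (B × S)} {w : B ⊕ S} {b : B}
    (h : (linkGraph L).Reachable w (inl b)) (hne : w ≠ inl b) : ∃ p ∈ L, p.1 = b := by
  obtain ⟨q⟩ := h.symm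
  cases q with
  | nil => exact absurd rfl hne
  | cons hadj q' =>
    obtain ⟨p, hp, hp1, _⟩ := adj_inl hadj
    exact ⟨p, hp, hp1⟩

lemma reach_seller_edge {L : Finset (B × S)} {w : B ⊕ S} {s : S}
    (h : (linkGraph L).Reachable w (inr s)) (hne : w ≠ inr s) : ∃ p ∈ L, p.2 = s := by
  obtain ⟨q⟩ := h.symm
  cases q with
  | nil => exact absurd rfl hne
  | cons hadj q' =>
    obtain ⟨p, hp, hp1, _⟩ := adj_inr hadj
    exact ⟨p, hp, hp1⟩

/-! ### sum helpers -/

lemma sum_except {α : Type*} [DecidableEq α] {T : Finset α} {f g : α → ℝ} {m : α} (hm : m ∈ T)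
    (h : ∀ x ∈ T, x ≠ m → f x = g x) :
    ∑ x ∈ T, f x = (∑ x ∈ T, g x) + (f m - g m) := by
  rw [← Finset.add_sum_erase _ f hm, ← Finset.add_sum_erase _ g hm,
    Finset.sum_congr rfl fun x hx => h x (Finset.mem_of_mem_erase hx) (Finset.ne_of_mem_erase hx)]
  ring

lemma exists_pos_of_sum_pos {α : Type*} {T : Finset α} {f : α → ℝ}
    (h : 0 < ∑ x ∈ T, f x) : ∃ x ∈ T, 0 < f x := by
  by_contra hc
  push_neg at hc
  exact absurd (Finset.sum_nonpos hc) (not_le.mpr h)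

/-! ### walk induction -/

lemma reach_mem {L : Finset (B × S)}
    (hC : ∀ (b b1 : B) (s1 s2 : S), (b, s1) ∈ L → (b1, s1) ∈ L → (b1, s2) ∈ L → (b, s2) ∈ L) :
    ∀ (n : ℕ) (b : B) (s : S) (w : (linkGraph L).Walk (inl b) (inr s)),
      w.length ≤ n → (b, s) ∈ L := by
  intro n
  induction n using Nat.strong_induction_on with
  | _ n ih =>
    intro b s w hlen
    cases w with
    | cons hadj q =>
      obtain ⟨p, hp, hp1, hy⟩ := adj_inl hadj
      subst hy
      cases q with
      | nil =>
        have : (b, p.2) ∈ L := by rw [← hp1]; simpa using hp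
        exact this
      | cons hadj2 q2 =>
        obtain ⟨p2, hp2, hp22, hz⟩ := adj_inr hadj2
        subst hz
        have hlen2 : q2.length < n := by
          simp only [SimpleGraph.Walk.length_cons] at hlen
          omega
        have hmem : (p2.1, s) ∈ L := ih q2.length hlen2 p2.1 s q2 le_rfl
        have hb : (b, p.2) ∈ L := by rw [← hp1]; simpa using hp
        have hb1 : (p2.1, p.2) ∈ L := by rw [← hp22]; simpa using hp2
        exact hC b p2.1 p.2 s hb hb1 hmem

/-! ### more helpers for claimC -/

lemma trade_dem_self' (st : TState B S) (x : B) (y : S) :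
    (trade st (x, y)).dem x = max 0 (st.dem x - st.sup y) := trade_dem_self st (x, y)

lemma trade_dem_ne' (st : TState B S) (x : B) (y : S) {b : B} (h : b ≠ x) :
    (trade st (x, y)).dem b = st.dem b := trade_dem_ne st (x, y) h

lemma trade_sup_self' (st : TState B S) (x : B) (y : S) :
    (trade st (x, y)).sup y = max 0 (st.sup y - st.dem x) := trade_sup_self st (x, y)

lemma trade_sup_ne' (st : TState B S) (x : B) (y : S) {s : S} (h : s ≠ y) :
    (trade st (x, y)).sup s = st.sup s := trade_sup_ne st (x, y) h

lemma run_single (st : TState B S) (x : B × S) : runSession st [x] = trade st x := rfl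

lemma run_pair (st : TState B S) (x y : B × S) :
    runSession st [x, y] = trade (trade st x) y := rfl

lemma closure_of_sub {L1 L2 : Finset (B × S)} (hsub : L2 ⊆ L1) (root : B ⊕ S) :
    ∀ p ∈ L2, (p.1 ∈ Finset.univ.filter (fun β : B => (linkGraph L1).Reachable root (inl β))
      ↔ p.2 ∈ Finset.univ.filter (fun σ : S => (linkGraph L1).Reachable root (inr σ))) := by
  intro p hp
  have hadj := adj_of_mem (hsub hp)
  constructor
  · intro h
    exact Finset.mem_filter.mpr
      ⟨Finset.mem_univ _, (Finset.mem_filter.mp h).2.trans hadj.reachable⟩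
  · intro h
    exact Finset.mem_filter.mpr
      ⟨Finset.mem_univ _, (Finset.mem_filter.mp h).2.trans hadj.symm.reachable⟩

/-! ### Claim C -/

lemma claimC {n : ℕ}
    (IH : ∀ (L' : Finset (B × S)) (st' : TState B S), Good L' st' → L'.card ≤ n →
      ∀ b s, (linkGraph L').Reachable (inl b) (inr s) → (b, s) ∈ L')
    {L : Finset (B × S)} {st : TState B S} (hG : Good L st) (hcard : L.card ≤ n + 1)
    (b b1 : B) (s1 s2 : S)
    (h1 : (b, s1) ∈ L) (h2 : (b1, s1) ∈ L) (h3 : (b1, s2) ∈ L) : (b, s2) ∈ L := by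
  by_contra hbs2
  have hbb1 : b ≠ b1 := fun h => hbs2 (by rw [h]; exact h3)
  have hs12 : s1 ≠ s2 := fun h => hbs2 (by rw [← h]; exact h1)
  have hd : 0 < st.dem b := (hG.pos _ h1).1
  have hu : 0 < st.sup s1 := (hG.pos _ h1).2
  have hd1 : 0 < st.dem b1 := (hG.pos _ h2).1
  have hv : 0 < st.sup s2 := (hG.pos _ h3).2
  have hp12 : ((b, s1) : B × S) ≠ (b1, s1) := fun h => hbb1 (congrArg Prod.fst h)
  have hp13 : ((b, s1) : B × S) ≠ (b1, s2) := fun h => hbb1 (congrArg Prod.fst h)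
  have hp23 : ((b1, s2) : B × S) ≠ (b1, s1) := fun h => hs12 (congrArg Prod.snd h).symm
  by_cases hc1 : st.dem b1 < st.sup s2
  · -- CASE 1 : dem b1 < sup s2 ; prefixes [(b1,s2)] and [(b1,s1),(b1,s2)]
    set st1 := runSession st [(b1, s2)] with hst1def
    have hst1 : st1 = trade st (b1, s2) := rfl
    have A1 : st1.dem b1 = 0 := by
      rw [hst1, trade_dem_self']; exact max_eq_left (by linarith)
    have A2 : st1.sup s2 = st.sup s2 - st.dem b1 := by
      rw [hst1, trade_sup_self']; exact max_eq_right (by linarith)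
    have A3 : ∀ x : B, x ≠ b1 → st1.dem x = st.dem x := fun x hx => by
      rw [hst1, trade_dem_ne' _ _ _ hx]
    have A4 : ∀ y : S, y ≠ s2 → st1.sup y = st.sup y := fun y hy => by
      rw [hst1, trade_sup_ne' _ _ _ hy]
    have hG1 : Good (aliveL L [(b1, s2)] st1) st1 := by
      rw [hst1def]
      exact good_prefix hG _ (fun p hp => by rw [List.mem_singleton] at hp; rw [hp]; exact h3)
        (List.nodup_singleton _)
    set L1 := aliveL L [(b1, s2)] st1 with hL1def
    have hcard1 : L1.card ≤ n := by
      have hcc := card_aliveL (st' := st1) h3 (List.mem_singleton.mpr rfl)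
      rw [← hL1def] at hcc
      omega
    by_cases hre : (linkGraph L1).Reachable (inl b) (inr s2)
    · exact hbs2 (aliveL_subset (IH L1 st1 hG1 hcard1 b s2 hre))
    have he1L1 : ((b, s1) : B × S) ∈ L1 := by
      refine mem_aliveL.mpr ⟨⟨h1, ?_⟩, ?_, ?_⟩
      · intro hc; exact hp13 (by simpa using hc)
      · rw [A3 b hbb1]; exact hd
      · rw [A4 s1 hs12]; exact hu
    have hbCB : ¬ (linkGraph L1).Reachable (inr s2) (inl b) := fun h => hre h.symm
    have hb1CB : ¬ (linkGraph L1).Reachable (inr s2) (inl b1) := by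
      intro h
      obtain ⟨p, hp, hp1⟩ := reach_buyer_edge h (by simp)
      have hpd := (mem_aliveL.mp hp).2.1
      rw [hp1, A1] at hpd
      exact lt_irrefl _ hpd
    have hs1CS : ¬ (linkGraph L1).Reachable (inr s2) (inr s1) := by
      intro h
      exact hbCB (h.trans (adj_of_mem' he1L1).symm.reachable)
    set st2 := runSession st [(b1, s1), (b1, s2)] with hst2def
    have hst2 : st2 = trade (trade st (b1, s1)) (b1, s2) := rfl
    have B0 : (trade st (b1, s1)).dem b1 = max 0 (st.dem b1 - st.sup s1) := trade_dem_self' _ _ _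
    have hrle : max 0 (st.dem b1 - st.sup s1) ≤ st.dem b1 := max_le (by linarith) (by linarith)
    have B1 : st2.dem b1 = 0 := by
      rw [hst2, trade_dem_self', B0, trade_sup_ne' _ _ _ (Ne.symm hs12)]
      exact max_eq_left (by linarith)
    have B2 : st2.sup s2 = st.sup s2 - max 0 (st.dem b1 - st.sup s1) := by
      rw [hst2, trade_sup_self', B0, trade_sup_ne' _ _ _ (Ne.symm hs12)]
      exact max_eq_right (by linarith)
    have B3 : ∀ x : B, x ≠ b1 → st2.dem x = st.dem x := fun x hx => by
      rw [hst2, trade_dem_ne' _ _ _ hx, trade_dem_ne' _ _ _ hx]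
    have B4 : ∀ y : S, y ≠ s1 → y ≠ s2 → st2.sup y = st.sup y := fun y hy1 hy2 => by
      rw [hst2, trade_sup_ne' _ _ _ hy2, trade_sup_ne' _ _ _ hy1]
    have hG2 : Good (aliveL L [(b1, s1), (b1, s2)] st2) st2 := by
      rw [hst2def]
      refine good_prefix hG _ ?_ ?_
      · intro p hp
        rcases List.mem_cons.mp hp with h | h
        · rw [h]; exact h2
        · rw [List.mem_singleton.mp h]; exact h3
      · refine List.nodup_cons.mpr ⟨?_, List.nodup_singleton _⟩
        rw [List.mem_singleton]; exact hp23.symm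
    set L2 := aliveL L [(b1, s1), (b1, s2)] st2 with hL2def
    have hL2sub : L2 ⊆ L1 := by
      intro p hp
      obtain ⟨⟨hpL, hpπ⟩, hpd, hps⟩ := mem_aliveL.mp hp
      have hp1ne : p.1 ≠ b1 := by
        intro h; rw [h, B1] at hpd; exact lt_irrefl _ hpd
      refine mem_aliveL.mpr ⟨⟨hpL, ?_⟩, ?_, ?_⟩
      · intro hc
        have hcc : p = (b1, s2) := by simpa using hc
        exact hp1ne (by rw [hcc])
      · rw [A3 p.1 hp1ne, ← B3 p.1 hp1ne]; exact hpd
      · by_cases hy2 : p.2 = s2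
        · rw [hy2, A2]; linarith
        · by_cases hy1 : p.2 = s1
          · rw [hy1, A4 s1 hs12]; exact hu
          · rw [A4 p.2 hy2, ← B4 p.2 hy1 hy2]; exact hps
    have hbal1 := bal_closed hG1 (closure_of_sub (Finset.Subset.refl L1) (inr s2))
    have hbal2 := bal_closed hG2 (closure_of_sub hL2sub (inr s2))
    have hL1sum : ∑ x ∈ Finset.univ.filter
          (fun β : B => (linkGraph L1).Reachable (inr s2) (inl β)), st1.dem x
        = ∑ x ∈ Finset.univ.filter
          (fun β : B => (linkGraph L1).Reachable (inr s2) (inl β)), st.dem x :=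
      Finset.sum_congr rfl fun x hx =>
        A3 x (fun h => hb1CB (h ▸ (Finset.mem_filter.mp hx).2))
    have hR1sum : ∑ y ∈ Finset.univ.filter
          (fun σ : S => (linkGraph L1).Reachable (inr s2) (inr σ)), st1.sup y
        = (∑ y ∈ Finset.univ.filter
          (fun σ : S => (linkGraph L1).Reachable (inr s2) (inr σ)), st.sup y)
          + (st1.sup s2 - st.sup s2) :=
      sum_except (Finset.mem_filter.mpr ⟨Finset.mem_univ _, SimpleGraph.Reachable.refl _⟩)
        (fun y _ hne => A4 y hne)
    have hL2sum : ∑ x ∈ Finset.univ.filter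
          (fun β : B => (linkGraph L1).Reachable (inr s2) (inl β)), st2.dem x
        = ∑ x ∈ Finset.univ.filter
          (fun β : B => (linkGraph L1).Reachable (inr s2) (inl β)), st.dem x :=
      Finset.sum_congr rfl fun x hx =>
        B3 x (fun h => hb1CB (h ▸ (Finset.mem_filter.mp hx).2))
    have hR2sum : ∑ y ∈ Finset.univ.filter
          (fun σ : S => (linkGraph L1).Reachable (inr s2) (inr σ)), st2.sup y
        = (∑ y ∈ Finset.univ.filter
          (fun σ : S => (linkGraph L1).Reachable (inr s2) (inr σ)), st.sup y)
          + (st2.sup s2 - st.sup s2) :=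
      sum_except (Finset.mem_filter.mpr ⟨Finset.mem_univ _, SimpleGraph.Reachable.refl _⟩)
        (fun y hy hne => B4 y (fun h => hs1CS (h ▸ (Finset.mem_filter.mp hy).2)) hne)
    rw [hL1sum, hR1sum, A2] at hbal1
    rw [hL2sum, hR2sum, B2] at hbal2
    have hkey : st.dem b1 = max 0 (st.dem b1 - st.sup s1) := by linarith
    rcases le_total (st.dem b1) (st.sup s1) with h | h
    · rw [max_eq_left (by linarith)] at hkey; linarith
    · rw [max_eq_right (by linarith)] at hkey; linarith
  · -- remaining cases
    push_neg at hc1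
    by_cases hc2 : st.sup s1 < st.dem b
    · -- CASE 2 : sup s1 < dem b ; prefixes [(b,s1)] and [(b1,s1),(b,s1)]
      set st1 := runSession st [(b, s1)] with hst1def
      have hst1 : st1 = trade st (b, s1) := rfl
      have A1 : st1.dem b = st.dem b - st.sup s1 := by
        rw [hst1, trade_dem_self']; exact max_eq_right (by linarith)
      have A2 : st1.sup s1 = 0 := by
        rw [hst1, trade_sup_self']; exact max_eq_left (by linarith)
      have A3 : ∀ x : B, x ≠ b → st1.dem x = st.dem x := fun x hx => by
        rw [hst1, trade_dem_ne' _ _ _ hx]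
      have A4 : ∀ y : S, y ≠ s1 → st1.sup y = st.sup y := fun y hy => by
        rw [hst1, trade_sup_ne' _ _ _ hy]
      have hG1 : Good (aliveL L [(b, s1)] st1) st1 := by
        rw [hst1def]
        exact good_prefix hG _ (fun p hp => by rw [List.mem_singleton] at hp; rw [hp]; exact h1)
          (List.nodup_singleton _)
      set L1 := aliveL L [(b, s1)] st1 with hL1def
      have hcard1 : L1.card ≤ n := by
        have hcc := card_aliveL (st' := st1) h1 (List.mem_singleton.mpr rfl)
        rw [← hL1def] at hcc
        omega
      by_cases hre : (linkGraph L1).Reachable (inl b) (inr s2)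
      · exact hbs2 (aliveL_subset (IH L1 st1 hG1 hcard1 b s2 hre))
      have hs1CS : ¬ (linkGraph L1).Reachable (inl b) (inr s1) := by
        intro h
        obtain ⟨p, hp, hp2⟩ := reach_seller_edge h (by simp)
        have hps := (mem_aliveL.mp hp).2.2
        rw [hp2, A2] at hps
        exact lt_irrefl _ hps
      have he3L1 : ((b1, s2) : B × S) ∈ L1 := by
        refine mem_aliveL.mpr ⟨⟨h3, ?_⟩, ?_, ?_⟩
        · intro hc
          have hcc : ((b1, s2) : B × S) = (b, s1) := by simpa using hc
          exact hp13 hcc.symm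
        · rw [A3 b1 (Ne.symm hbb1)]; exact hd1
        · rw [A4 s2 (Ne.symm hs12)]; exact hv
      have hb1CB : ¬ (linkGraph L1).Reachable (inl b) (inl b1) := by
        intro h
        exact hre (h.trans (adj_of_mem' he3L1).reachable)
      set st2 := runSession st [(b1, s1), (b, s1)] with hst2def
      have hst2 : st2 = trade (trade st (b1, s1)) (b, s1) := rfl
      have W0 : (trade st (b1, s1)).sup s1 = max 0 (st.sup s1 - st.dem b1) := trade_sup_self' _ _ _
      have hwle : max 0 (st.sup s1 - st.dem b1) ≤ st.sup s1 := max_le (by linarith) (by linarith)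
      have B1 : st2.dem b = st.dem b - max 0 (st.sup s1 - st.dem b1) := by
        rw [hst2, trade_dem_self', W0, trade_dem_ne' _ _ _ hbb1]
        exact max_eq_right (by linarith)
      have B2 : st2.sup s1 = 0 := by
        rw [hst2, trade_sup_self', W0, trade_dem_ne' _ _ _ hbb1]
        exact max_eq_left (by linarith)
      have B4 : ∀ x : B, x ≠ b → x ≠ b1 → st2.dem x = st.dem x := fun x hx hx1 => by
        rw [hst2, trade_dem_ne' _ _ _ hx, trade_dem_ne' _ _ _ hx1]
      have B5 : ∀ y : S, y ≠ s1 → st2.sup y = st.sup y := fun y hy => by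
        rw [hst2, trade_sup_ne' _ _ _ hy, trade_sup_ne' _ _ _ hy]
      have hG2 : Good (aliveL L [(b1, s1), (b, s1)] st2) st2 := by
        rw [hst2def]
        refine good_prefix hG _ ?_ ?_
        · intro p hp
          rcases List.mem_cons.mp hp with h | h
          · rw [h]; exact h2
          · rw [List.mem_singleton.mp h]; exact h1
        · refine List.nodup_cons.mpr ⟨?_, List.nodup_singleton _⟩
          rw [List.mem_singleton]; exact Ne.symm hp12
      set L2 := aliveL L [(b1, s1), (b, s1)] st2 with hL2def
      have hL2sub : L2 ⊆ L1 := by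
        intro p hp
        obtain ⟨⟨hpL, hpπ⟩, hpd, hps⟩ := mem_aliveL.mp hp
        have hp2ne : p.2 ≠ s1 := by
          intro h; rw [h, B2] at hps; exact lt_irrefl _ hps
        refine mem_aliveL.mpr ⟨⟨hpL, ?_⟩, ?_, ?_⟩
        · intro hc
          have hcc : p = (b, s1) := by simpa using hc
          exact hp2ne (by rw [hcc])
        · by_cases hx : p.1 = b
          · rw [hx, A1]; linarith
          · by_cases hx1 : p.1 = b1
            · rw [hx1, A3 b1 (Ne.symm hbb1)]; exact hd1
            · rw [A3 p.1 hx, ← B4 p.1 hx hx1]; exact hpd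
        · rw [A4 p.2 hp2ne, ← B5 p.2 hp2ne]; exact hps
      have hbal1 := bal_closed hG1 (closure_of_sub (Finset.Subset.refl L1) (inl b))
      have hbal2 := bal_closed hG2 (closure_of_sub hL2sub (inl b))
      have hL1sum : ∑ x ∈ Finset.univ.filter (fun β : B => (linkGraph L1).Reachable (inl b) (inl β)), st1.dem x
          = (∑ x ∈ Finset.univ.filter (fun β : B => (linkGraph L1).Reachable (inl b) (inl β)), st.dem x) + (st1.dem b - st.dem b) :=
        sum_except (Finset.mem_filter.mpr ⟨Finset.mem_univ _, SimpleGraph.Reachable.refl _⟩)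
          (fun x _ hne => A3 x hne)
      have hR1sum : ∑ y ∈ Finset.univ.filter (fun σ : S => (linkGraph L1).Reachable (inl b) (inr σ)), st1.sup y
          = ∑ y ∈ Finset.univ.filter (fun σ : S => (linkGraph L1).Reachable (inl b) (inr σ)), st.sup y :=
        Finset.sum_congr rfl fun y hy =>
          A4 y (fun h => hs1CS (h ▸ (Finset.mem_filter.mp hy).2))
      have hL2sum : ∑ x ∈ Finset.univ.filter (fun β : B => (linkGraph L1).Reachable (inl b) (inl β)), st2.dem x
          = (∑ x ∈ Finset.univ.filter (fun β : B => (linkGraph L1).Reachable (inl b) (inl β)), st.dem x) + (st2.dem b - st.dem b) :=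
        sum_except (Finset.mem_filter.mpr ⟨Finset.mem_univ _, SimpleGraph.Reachable.refl _⟩)
          (fun x hx hne => B4 x hne (fun h => hb1CB (h ▸ (Finset.mem_filter.mp hx).2)))
      have hR2sum : ∑ y ∈ Finset.univ.filter (fun σ : S => (linkGraph L1).Reachable (inl b) (inr σ)), st2.sup y
          = ∑ y ∈ Finset.univ.filter (fun σ : S => (linkGraph L1).Reachable (inl b) (inr σ)), st.sup y :=
        Finset.sum_congr rfl fun y hy =>
          B5 y (fun h => hs1CS (h ▸ (Finset.mem_filter.mp hy).2))
      rw [hL1sum, hR1sum, A1] at hbal1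
      rw [hL2sum, hR2sum, B1] at hbal2
      have hkey : st.sup s1 = max 0 (st.sup s1 - st.dem b1) := by linarith
      rcases le_total (st.sup s1) (st.dem b1) with h | h
      · rw [max_eq_left (by linarith)] at hkey; linarith
      · rw [max_eq_right (by linarith)] at hkey; linarith
    · push_neg at hc2
      rcases lt_trichotomy (st.dem b1) (st.sup s1) with hc3 | hc3 | hc3
      · -- CASE 3 : dem b1 < sup s1, sup s2 ≤ dem b1, dem b ≤ sup s1
        set st1 := runSession st [(b1, s1)] with hst1def
        have hst1 : st1 = trade st (b1, s1) := rfl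
        have A1 : st1.dem b1 = 0 := by
          rw [hst1, trade_dem_self']; exact max_eq_left (by linarith)
        have A2 : st1.sup s1 = st.sup s1 - st.dem b1 := by
          rw [hst1, trade_sup_self']; exact max_eq_right (by linarith)
        have A3 : ∀ x : B, x ≠ b1 → st1.dem x = st.dem x := fun x hx => by
          rw [hst1, trade_dem_ne' _ _ _ hx]
        have A4 : ∀ y : S, y ≠ s1 → st1.sup y = st.sup y := fun y hy => by
          rw [hst1, trade_sup_ne' _ _ _ hy]
        have hG1 : Good (aliveL L [(b1, s1)] st1) st1 := by
          rw [hst1def]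
          exact good_prefix hG _
            (fun p hp => by rw [List.mem_singleton] at hp; rw [hp]; exact h2)
            (List.nodup_singleton _)
        set L1 := aliveL L [(b1, s1)] st1 with hL1def
        have hcard1 : L1.card ≤ n := by
          have hcc := card_aliveL (st' := st1) h2 (List.mem_singleton.mpr rfl)
          rw [← hL1def] at hcc
          omega
        by_cases hre : (linkGraph L1).Reachable (inl b) (inr s2)
        · exact hbs2 (aliveL_subset (IH L1 st1 hG1 hcard1 b s2 hre))
        have he1L1 : ((b, s1) : B × S) ∈ L1 := by
          refine mem_aliveL.mpr ⟨⟨h1, ?_⟩, ?_, ?_⟩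
          · intro hc
            have hcc : ((b, s1) : B × S) = (b1, s1) := by simpa using hc
            exact hp12 hcc
          · rw [A3 b hbb1]; exact hd
          · rw [A2]; linarith
        have hbCB : ¬ (linkGraph L1).Reachable (inr s2) (inl b) := fun h => hre h.symm
        have hb1CB : ¬ (linkGraph L1).Reachable (inr s2) (inl b1) := by
          intro h
          obtain ⟨p, hp, hp1⟩ := reach_buyer_edge h (by simp)
          have hpd := (mem_aliveL.mp hp).2.1
          rw [hp1, A1] at hpd
          exact lt_irrefl _ hpd
        have hs1CS : ¬ (linkGraph L1).Reachable (inr s2) (inr s1) := by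
          intro h
          exact hbCB (h.trans (adj_of_mem' he1L1).symm.reachable)
        set st2 := runSession st [(b1, s2), (b1, s1)] with hst2def
        have hst2 : st2 = trade (trade st (b1, s2)) (b1, s1) := rfl
        have W0 : (trade st (b1, s2)).dem b1 = st.dem b1 - st.sup s2 := by
          rw [trade_dem_self']; exact max_eq_right (by linarith)
        have B1 : st2.dem b1 = 0 := by
          rw [hst2, trade_dem_self', W0, trade_sup_ne' _ _ _ hs12]
          exact max_eq_left (by linarith)
        have B2 : st2.sup s2 = 0 := by
          rw [hst2, trade_sup_ne' _ _ _ (Ne.symm hs12), trade_sup_self']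
          exact max_eq_left (by linarith)
        have B3 : st2.sup s1 = st.sup s1 - (st.dem b1 - st.sup s2) := by
          rw [hst2, trade_sup_self', W0, trade_sup_ne' _ _ _ hs12]
          exact max_eq_right (by linarith)
        have B4 : ∀ x : B, x ≠ b1 → st2.dem x = st.dem x := fun x hx => by
          rw [hst2, trade_dem_ne' _ _ _ hx, trade_dem_ne' _ _ _ hx]
        have B5 : ∀ y : S, y ≠ s1 → y ≠ s2 → st2.sup y = st.sup y := fun y hy1 hy2 => by
          rw [hst2, trade_sup_ne' _ _ _ hy1, trade_sup_ne' _ _ _ hy2]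
        have hG2 : Good (aliveL L [(b1, s2), (b1, s1)] st2) st2 := by
          rw [hst2def]
          refine good_prefix hG _ ?_ ?_
          · intro p hp
            rcases List.mem_cons.mp hp with h | h
            · rw [h]; exact h3
            · rw [List.mem_singleton.mp h]; exact h2
          · refine List.nodup_cons.mpr ⟨?_, List.nodup_singleton _⟩
            rw [List.mem_singleton]; exact hp23
        set L2 := aliveL L [(b1, s2), (b1, s1)] st2 with hL2def
        have hL2sub : L2 ⊆ L1 := by
          intro p hp
          obtain ⟨⟨hpL, hpπ⟩, hpd, hps⟩ := mem_aliveL.mp hp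
          have hp1ne : p.1 ≠ b1 := by
            intro h; rw [h, B1] at hpd; exact lt_irrefl _ hpd
          have hp2ne : p.2 ≠ s2 := by
            intro h; rw [h, B2] at hps; exact lt_irrefl _ hps
          refine mem_aliveL.mpr ⟨⟨hpL, ?_⟩, ?_, ?_⟩
          · intro hc
            have hcc : p = (b1, s1) := by simpa using hc
            exact hp1ne (by rw [hcc])
          · rw [A3 p.1 hp1ne, ← B4 p.1 hp1ne]; exact hpd
          · by_cases hy1 : p.2 = s1
            · rw [hy1, A2]; linarith
            · rw [A4 p.2 hy1, ← B5 p.2 hy1 hp2ne]; exact hps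
        have hbal1 := bal_closed hG1 (closure_of_sub (Finset.Subset.refl L1) (inr s2))
        have hbal2 := bal_closed hG2 (closure_of_sub hL2sub (inr s2))
        have hL1sum : ∑ x ∈ Finset.univ.filter (fun β : B => (linkGraph L1).Reachable (inr s2) (inl β)), st1.dem x
            = ∑ x ∈ Finset.univ.filter (fun β : B => (linkGraph L1).Reachable (inr s2) (inl β)), st.dem x :=
          Finset.sum_congr rfl fun x hx =>
            A3 x (fun h => hb1CB (h ▸ (Finset.mem_filter.mp hx).2))
        have hR1sum : ∑ y ∈ Finset.univ.filter (fun σ : S => (linkGraph L1).Reachable (inr s2) (inr σ)), st1.sup y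
            = ∑ y ∈ Finset.univ.filter (fun σ : S => (linkGraph L1).Reachable (inr s2) (inr σ)), st.sup y :=
          Finset.sum_congr rfl fun y hy =>
            A4 y (fun h => hs1CS (h ▸ (Finset.mem_filter.mp hy).2))
        have hL2sum : ∑ x ∈ Finset.univ.filter (fun β : B => (linkGraph L1).Reachable (inr s2) (inl β)), st2.dem x
            = ∑ x ∈ Finset.univ.filter (fun β : B => (linkGraph L1).Reachable (inr s2) (inl β)), st.dem x :=
          Finset.sum_congr rfl fun x hx =>
            B4 x (fun h => hb1CB (h ▸ (Finset.mem_filter.mp hx).2))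
        have hR2sum : ∑ y ∈ Finset.univ.filter (fun σ : S => (linkGraph L1).Reachable (inr s2) (inr σ)), st2.sup y
            = (∑ y ∈ Finset.univ.filter (fun σ : S => (linkGraph L1).Reachable (inr s2) (inr σ)), st.sup y) + (st2.sup s2 - st.sup s2) :=
          sum_except (Finset.mem_filter.mpr ⟨Finset.mem_univ _, SimpleGraph.Reachable.refl _⟩)
            (fun y hy hne => B5 y (fun h => hs1CS (h ▸ (Finset.mem_filter.mp hy).2)) hne)
        rw [hL1sum, hR1sum] at hbal1
        rw [hL2sum, hR2sum, B2] at hbal2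
        linarith
      · -- CASE 5 (corner) : dem b1 = sup s1, sup s2 ≤ dem b1, dem b ≤ sup s1
        set st3 := runSession st [(b1, s1)] with hst3def
        have hst3 : st3 = trade st (b1, s1) := rfl
        have E1 : st3.dem b1 = 0 := by
          rw [hst3, trade_dem_self']; exact max_eq_left (by linarith)
        have E2 : st3.sup s1 = 0 := by
          rw [hst3, trade_sup_self']; exact max_eq_left (by linarith)
        have E3 : ∀ x : B, x ≠ b1 → st3.dem x = st.dem x := fun x hx => by
          rw [hst3, trade_dem_ne' _ _ _ hx]
        have E4 : ∀ y : S, y ≠ s1 → st3.sup y = st.sup y := fun y hy => by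
          rw [hst3, trade_sup_ne' _ _ _ hy]
        have hG3 : Good (aliveL L [(b1, s1)] st3) st3 := by
          rw [hst3def]
          exact good_prefix hG _
            (fun p hp => by rw [List.mem_singleton] at hp; rw [hp]; exact h2)
            (List.nodup_singleton _)
        set L3 := aliveL L [(b1, s1)] st3 with hL3def
        have hcard3 : L3.card ≤ n := by
          have hcc := card_aliveL (st' := st3) h2 (List.mem_singleton.mpr rfl)
          rw [← hL3def] at hcc
          omega
        by_cases hex : ∃ y : S, (b, y) ∈ L3
        case neg =>
          have h0 := hG3.succ L3.toList (List.Perm.refl _) b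
          have huntouched : (runSession st3 L3.toList).dem b = st3.dem b := by
            apply dem_untouched
            intro l hl hlb
            exact hex ⟨l.2, by rw [← hlb, Prod.mk.eta]; exact Finset.mem_toList.mp hl⟩
          rw [huntouched, E3 b hbb1] at h0
          linarith
        case pos =>
        obtain ⟨σ0, hσ0⟩ := hex
        have hσ0alive := (mem_aliveL.mp hσ0).2.2
        have hσ0s1 : σ0 ≠ s1 := by
          intro h; rw [h, E2] at hσ0alive; exact lt_irrefl _ hσ0alive
        have hσ0s2 : σ0 ≠ s2 := by
          intro h
          exact hbs2 (aliveL_subset (h ▸ hσ0))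
        by_cases hre : (linkGraph L3).Reachable (inl b) (inr s2)
        · exact hbs2 (aliveL_subset (IH L3 st3 hG3 hcard3 b s2 hre))
        set st6 := runSession st [(b1, s2)] with hst6def
        have hst6 : st6 = trade st (b1, s2) := rfl
        have F1 : st6.dem b1 = st.dem b1 - st.sup s2 := by
          rw [hst6, trade_dem_self']; exact max_eq_right (by linarith)
        have F2 : st6.sup s2 = 0 := by
          rw [hst6, trade_sup_self']; exact max_eq_left (by linarith)
        have F3 : ∀ x : B, x ≠ b1 → st6.dem x = st.dem x := fun x hx => by
          rw [hst6, trade_dem_ne' _ _ _ hx]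
        have F4 : ∀ y : S, y ≠ s2 → st6.sup y = st.sup y := fun y hy => by
          rw [hst6, trade_sup_ne' _ _ _ hy]
        have hG6 : Good (aliveL L [(b1, s2)] st6) st6 := by
          rw [hst6def]
          exact good_prefix hG _
            (fun p hp => by rw [List.mem_singleton] at hp; rw [hp]; exact h3)
            (List.nodup_singleton _)
        set L6 := aliveL L [(b1, s2)] st6 with hL6def
        have hcard6 : L6.card ≤ n := by
          have hcc := card_aliveL (st' := st6) h3 (List.mem_singleton.mpr rfl)
          rw [← hL6def] at hcc
          omega
        have hb1CB3 : ¬ (linkGraph L3).Reachable (inl b) (inl b1) := by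
          intro h
          obtain ⟨p, hp, hp1⟩ := reach_buyer_edge h (by simpa using hbb1)
          have hpd := (mem_aliveL.mp hp).2.1
          rw [hp1, E1] at hpd
          exact lt_irrefl _ hpd
        have hs1CS3 : ¬ (linkGraph L3).Reachable (inl b) (inr s1) := by
          intro h
          obtain ⟨p, hp, hp2⟩ := reach_seller_edge h (by simp)
          have hps := (mem_aliveL.mp hp).2.2
          rw [hp2, E2] at hps
          exact lt_irrefl _ hps
        have hs2CS6 : ¬ (linkGraph L6).Reachable (inl b) (inr s2) := by
          intro h
          obtain ⟨p, hp, hp2⟩ := reach_seller_edge h (by simp)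
          have hps := (mem_aliveL.mp hp).2.2
          rw [hp2, F2] at hps
          exact lt_irrefl _ hps
        have htrans : ∀ p : B × S, p ∈ L3 → p.2 ≠ s2 → p ∈ L6 := by
          intro p hp hp2
          obtain ⟨⟨hpL, hpπ⟩, hpd, hps⟩ := mem_aliveL.mp hp
          have hp1 : p.1 ≠ b1 := by
            intro h; rw [h, E1] at hpd; exact lt_irrefl _ hpd
          have hp2s1 : p.2 ≠ s1 := by
            intro h; rw [h, E2] at hps; exact lt_irrefl _ hps
          refine mem_aliveL.mpr ⟨⟨hpL, ?_⟩, ?_, ?_⟩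
          · intro hc
            have hcc : p = (b1, s2) := by simpa using hc
            exact hp1 (by rw [hcc])
          · rw [F3 p.1 hp1, ← E3 p.1 hp1]; exact hpd
          · rw [F4 p.2 hp2, ← E4 p.2 hp2s1]; exact hps
        have hσ0CS3 : (linkGraph L3).Reachable (inl b) (inr σ0) := (adj_of_mem' hσ0).reachable
        have hσ06 : ((b, σ0) : B × S) ∈ L6 := htrans _ hσ0 hσ0s2
        have hσ0CS6 : (linkGraph L6).Reachable (inl b) (inr σ0) := (adj_of_mem' hσ06).reachable
        have hcomp3 : ∀ (x : B) (y : S), (linkGraph L3).Reachable (inl b) (inl x) →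
            (linkGraph L3).Reachable (inl b) (inr y) → (x, y) ∈ L3 :=
          fun x y hx hy => IH L3 st3 hG3 hcard3 x y (hx.symm.trans hy)
        have hCS36 : ∀ y : S, (linkGraph L3).Reachable (inl b) (inr y) →
            (linkGraph L6).Reachable (inl b) (inr y) := by
          intro y hy
          have hby : ((b, y) : B × S) ∈ L3 := hcomp3 b y (SimpleGraph.Reachable.refl _) hy
          have hys2 : y ≠ s2 := fun h => hre (h ▸ hy)
          exact (adj_of_mem' (htrans _ hby hys2)).reachable
        have hCB36 : ∀ x : B, (linkGraph L3).Reachable (inl b) (inl x) →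
            (linkGraph L6).Reachable (inl b) (inl x) := by
          intro x hx
          have hxy : ((x, σ0) : B × S) ∈ L3 := hcomp3 x σ0 hx hσ0CS3
          exact hσ0CS6.trans (adj_of_mem' (htrans _ hxy hσ0s2)).symm.reachable
        have he1L6 : ((b, s1) : B × S) ∈ L6 := by
          refine mem_aliveL.mpr ⟨⟨h1, ?_⟩, ?_, ?_⟩
          · intro hc
            have hcc : ((b, s1) : B × S) = (b1, s2) := by simpa using hc
            exact hp13 hcc
          · rw [F3 b hbb1]; exact hd
          · rw [F4 s1 hs12]; exact hu
        have hs1CS6 : (linkGraph L6).Reachable (inl b) (inr s1) := (adj_of_mem' he1L6).reachable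
        have hbal3 := bal_closed hG3 (closure_of_sub (Finset.Subset.refl L3) (inl b))
        have hbal6 := bal_closed hG6 (closure_of_sub (Finset.Subset.refl L6) (inl b))
        have hL3sum : ∑ x ∈ Finset.univ.filter (fun β : B => (linkGraph L3).Reachable (inl b) (inl β)), st3.dem x
            = ∑ x ∈ Finset.univ.filter (fun β : B => (linkGraph L3).Reachable (inl b) (inl β)), st.dem x :=
          Finset.sum_congr rfl fun x hx =>
            E3 x (fun h => hb1CB3 (h ▸ (Finset.mem_filter.mp hx).2))
        have hR3sum : ∑ y ∈ Finset.univ.filter (fun σ : S => (linkGraph L3).Reachable (inl b) (inr σ)), st3.sup y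
            = ∑ y ∈ Finset.univ.filter (fun σ : S => (linkGraph L3).Reachable (inl b) (inr σ)), st.sup y :=
          Finset.sum_congr rfl fun y hy =>
            E4 y (fun h => hs1CS3 (h ▸ (Finset.mem_filter.mp hy).2))
        have hR6sum : ∑ y ∈ Finset.univ.filter (fun σ : S => (linkGraph L6).Reachable (inl b) (inr σ)), st6.sup y
            = ∑ y ∈ Finset.univ.filter (fun σ : S => (linkGraph L6).Reachable (inl b) (inr σ)), st.sup y :=
          Finset.sum_congr rfl fun y hy =>
            F4 y (fun h => hs2CS6 (h ▸ (Finset.mem_filter.mp hy).2))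
        rw [hL3sum, hR3sum] at hbal3
        rw [hR6sum] at hbal6
        have hsubB : (Finset.univ.filter (fun β : B => (linkGraph L3).Reachable (inl b) (inl β))) ⊆ Finset.univ.filter (fun β : B => (linkGraph L6).Reachable (inl b) (inl β)) :=
          fun x hx => Finset.mem_filter.mpr
            ⟨Finset.mem_univ _, hCB36 x (Finset.mem_filter.mp hx).2⟩
        have hsubS : (Finset.univ.filter (fun σ : S => (linkGraph L3).Reachable (inl b) (inr σ))) ⊆ Finset.univ.filter (fun σ : S => (linkGraph L6).Reachable (inl b) (inr σ)) :=
          fun y hy => Finset.mem_filter.mpr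
            ⟨Finset.mem_univ _, hCS36 y (Finset.mem_filter.mp hy).2⟩
        have hsumB := Finset.sum_sdiff (f := st.dem) hsubB
        have hsumS := Finset.sum_sdiff (f := st.sup) hsubS
        have hs1mem : s1 ∈ (Finset.univ.filter (fun σ : S => (linkGraph L6).Reachable (inl b) (inr σ))) \ Finset.univ.filter (fun σ : S => (linkGraph L3).Reachable (inl b) (inr σ)) :=
          Finset.mem_sdiff.mpr ⟨Finset.mem_filter.mpr ⟨Finset.mem_univ _, hs1CS6⟩,
            fun hc => hs1CS3 (Finset.mem_filter.mp hc).2⟩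
        have hsingle : st.sup s1 ≤
            ∑ y ∈ (Finset.univ.filter (fun σ : S => (linkGraph L6).Reachable (inl b) (inr σ))) \ Finset.univ.filter (fun σ : S => (linkGraph L3).Reachable (inl b) (inr σ)), st.sup y :=
          Finset.single_le_sum (fun y _ => hG.nn.2 y) hs1mem
        -- produce a buyer β in CB6 \ CB3 with β ≠ b1 and positive original demand
        have hβ : ∃ β : B, β ≠ b1 ∧ 0 < st.dem β ∧
            (linkGraph L6).Reachable (inl b) (inl β) ∧
            ¬ (linkGraph L3).Reachable (inl b) (inl β) := by
          by_cases hb16 : (linkGraph L6).Reachable (inl b) (inl b1)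
          · have hb1mem : b1 ∈ (Finset.univ.filter (fun β : B => (linkGraph L6).Reachable (inl b) (inl β))) \ Finset.univ.filter (fun β : B => (linkGraph L3).Reachable (inl b) (inl β)) :=
              Finset.mem_sdiff.mpr ⟨Finset.mem_filter.mpr ⟨Finset.mem_univ _, hb16⟩,
                fun hc => hb1CB3 (Finset.mem_filter.mp hc).2⟩
            have hL6sum : ∑ x ∈ Finset.univ.filter (fun β : B => (linkGraph L6).Reachable (inl b) (inl β)), st6.dem x
                = (∑ x ∈ Finset.univ.filter (fun β : B => (linkGraph L6).Reachable (inl b) (inl β)), st.dem x) + (st6.dem b1 - st.dem b1) :=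
              sum_except (Finset.mem_filter.mpr ⟨Finset.mem_univ _, hb16⟩)
                (fun x _ hne => F3 x hne)
            rw [hL6sum, F1] at hbal6
            have hsplit := Finset.add_sum_erase _ st.dem hb1mem
            have hpos : 0 < ∑ x ∈ ((Finset.univ.filter (fun β : B => (linkGraph L6).Reachable (inl b) (inl β))) \
                (Finset.univ.filter (fun β : B => (linkGraph L3).Reachable (inl b) (inl β)))).erase b1, st.dem x := by
              linarith
            obtain ⟨β, hβmem, hβpos⟩ := exists_pos_of_sum_pos hpos
            have hβne : β ≠ b1 := (Finset.mem_erase.mp hβmem).1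
            have hβ6 := Finset.mem_sdiff.mp (Finset.mem_erase.mp hβmem).2
            exact ⟨β, hβne, hβpos, (Finset.mem_filter.mp hβ6.1).2,
              fun hc => hβ6.2 (Finset.mem_filter.mpr ⟨Finset.mem_univ _, hc⟩)⟩
          · have hL6sum : ∑ x ∈ Finset.univ.filter (fun β : B => (linkGraph L6).Reachable (inl b) (inl β)), st6.dem x
                = ∑ x ∈ Finset.univ.filter (fun β : B => (linkGraph L6).Reachable (inl b) (inl β)), st.dem x :=
              Finset.sum_congr rfl fun x hx =>
                F3 x (fun h => hb16 (h ▸ (Finset.mem_filter.mp hx).2))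
            rw [hL6sum] at hbal6
            have hpos : 0 < ∑ x ∈ (Finset.univ.filter (fun β : B => (linkGraph L6).Reachable (inl b) (inl β))) \
                (Finset.univ.filter (fun β : B => (linkGraph L3).Reachable (inl b) (inl β))), st.dem x := by
              linarith
            obtain ⟨β, hβmem, hβpos⟩ := exists_pos_of_sum_pos hpos
            have hβ6 := Finset.mem_sdiff.mp hβmem
            have hβreach := (Finset.mem_filter.mp hβ6.1).2
            have hβne : β ≠ b1 := fun h => hb16 (h ▸ hβreach)
            exact ⟨β, hβne, hβpos, hβreach,
              fun hc => hβ6.2 (Finset.mem_filter.mpr ⟨Finset.mem_univ _, hc⟩)⟩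
        obtain ⟨β, hβne, hβpos, hβ6reach, hβ3not⟩ := hβ
        have hmem6 : ((β, σ0) : B × S) ∈ L6 :=
          IH L6 st6 hG6 hcard6 β σ0 (hβ6reach.symm.trans hσ0CS6)
        have hmem3 : ((β, σ0) : B × S) ∈ L3 := by
          refine mem_aliveL.mpr ⟨⟨aliveL_subset hmem6, ?_⟩, ?_, ?_⟩
          · intro hc
            have hcc : ((β, σ0) : B × S) = (b1, s1) := by simpa using hc
            exact hβne (congrArg Prod.fst hcc)
          · rw [E3 β hβne]; exact hβpos
          · exact hσ0alive
        exact hβ3not (hσ0CS3.trans (adj_of_mem' hmem3).symm.reachable)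
      · -- CASE 4 : sup s1 < dem b1, sup s2 ≤ dem b1, dem b ≤ sup s1
        set st2 := runSession st [(b1, s1), (b, s1)] with hst2def
        have hst2 : st2 = trade (trade st (b1, s1)) (b, s1) := rfl
        have W0 : (trade st (b1, s1)).sup s1 = 0 := by
          rw [trade_sup_self']; exact max_eq_left (by linarith)
        have C1 : st2.dem b1 = st.dem b1 - st.sup s1 := by
          rw [hst2, trade_dem_ne' _ _ _ (Ne.symm hbb1), trade_dem_self']
          exact max_eq_right (by linarith)
        have C2 : st2.sup s1 = 0 := by
          rw [hst2, trade_sup_self', W0, trade_dem_ne' _ _ _ hbb1]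
          exact max_eq_left (by linarith)
        have C3 : st2.dem b = st.dem b := by
          rw [hst2, trade_dem_self', W0, trade_dem_ne' _ _ _ hbb1, sub_zero]
          exact max_eq_right (by linarith)
        have C4 : ∀ x : B, x ≠ b → x ≠ b1 → st2.dem x = st.dem x := fun x hx hx1 => by
          rw [hst2, trade_dem_ne' _ _ _ hx, trade_dem_ne' _ _ _ hx1]
        have C5 : ∀ y : S, y ≠ s1 → st2.sup y = st.sup y := fun y hy => by
          rw [hst2, trade_sup_ne' _ _ _ hy, trade_sup_ne' _ _ _ hy]
        have hG2 : Good (aliveL L [(b1, s1), (b, s1)] st2) st2 := by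
          rw [hst2def]
          refine good_prefix hG _ ?_ ?_
          · intro p hp
            rcases List.mem_cons.mp hp with h | h
            · rw [h]; exact h2
            · rw [List.mem_singleton.mp h]; exact h1
          · refine List.nodup_cons.mpr ⟨?_, List.nodup_singleton _⟩
            rw [List.mem_singleton]; exact Ne.symm hp12
        set L2 := aliveL L [(b1, s1), (b, s1)] st2 with hL2def
        have hcard2 : L2.card ≤ n := by
          have hcc := card_aliveL (π := [(b1, s1), (b, s1)]) (st' := st2) h2
            (List.mem_cons_self)
          rw [← hL2def] at hcc
          omega
        by_cases hre : (linkGraph L2).Reachable (inl b) (inr s2)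
        · exact hbs2 (aliveL_subset (IH L2 st2 hG2 hcard2 b s2 hre))
        have hbCB : ¬ (linkGraph L2).Reachable (inr s2) (inl b) := fun h => hre h.symm
        have hs1CS : ¬ (linkGraph L2).Reachable (inr s2) (inr s1) := by
          intro h
          obtain ⟨p, hp, hp2⟩ := reach_seller_edge h (by simpa using Ne.symm hs12)
          have hps := (mem_aliveL.mp hp).2.2
          rw [hp2, C2] at hps
          exact lt_irrefl _ hps
        have he3L2 : ((b1, s2) : B × S) ∈ L2 := by
          refine mem_aliveL.mpr ⟨⟨h3, ?_⟩, ?_, ?_⟩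
          · intro hc
            rcases List.mem_cons.mp (List.mem_toFinset.mp hc) with h | h
            · exact hp23 h
            · exact hp13 (List.mem_singleton.mp h).symm
          · rw [C1]; linarith
          · rw [C5 s2 (Ne.symm hs12)]; exact hv
        have hb1CB : (linkGraph L2).Reachable (inr s2) (inl b1) :=
          (adj_of_mem' he3L2).symm.reachable
        set st1 := runSession st [(b, s1), (b1, s1)] with hst1def
        have hst1 : st1 = trade (trade st (b, s1)) (b1, s1) := rfl
        have V0 : (trade st (b, s1)).sup s1 = st.sup s1 - st.dem b := by
          rw [trade_sup_self']; exact max_eq_right (by linarith)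
        have D1 : st1.dem b = 0 := by
          rw [hst1, trade_dem_ne' _ _ _ hbb1, trade_dem_self']
          exact max_eq_left (by linarith)
        have D2 : st1.dem b1 = st.dem b1 - (st.sup s1 - st.dem b) := by
          rw [hst1, trade_dem_self', V0, trade_dem_ne' _ _ _ (Ne.symm hbb1)]
          exact max_eq_right (by linarith)
        have D3 : st1.sup s1 = 0 := by
          rw [hst1, trade_sup_self', V0, trade_dem_ne' _ _ _ (Ne.symm hbb1)]
          exact max_eq_left (by linarith)
        have D4 : ∀ x : B, x ≠ b → x ≠ b1 → st1.dem x = st.dem x := fun x hx hx1 => by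
          rw [hst1, trade_dem_ne' _ _ _ hx1, trade_dem_ne' _ _ _ hx]
        have D5 : ∀ y : S, y ≠ s1 → st1.sup y = st.sup y := fun y hy => by
          rw [hst1, trade_sup_ne' _ _ _ hy, trade_sup_ne' _ _ _ hy]
        have hG1 : Good (aliveL L [(b, s1), (b1, s1)] st1) st1 := by
          rw [hst1def]
          refine good_prefix hG _ ?_ ?_
          · intro p hp
            rcases List.mem_cons.mp hp with h | h
            · rw [h]; exact h1
            · rw [List.mem_singleton.mp h]; exact h2
          · refine List.nodup_cons.mpr ⟨?_, List.nodup_singleton _⟩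
            rw [List.mem_singleton]; exact hp12
        set L1 := aliveL L [(b, s1), (b1, s1)] st1 with hL1def
        have hL1sub : L1 ⊆ L2 := by
          intro p hp
          obtain ⟨⟨hpL, hpπ⟩, hpd, hps⟩ := mem_aliveL.mp hp
          have hp1ne : p.1 ≠ b := by
            intro h; rw [h, D1] at hpd; exact lt_irrefl _ hpd
          have hp2ne : p.2 ≠ s1 := by
            intro h; rw [h, D3] at hps; exact lt_irrefl _ hps
          refine mem_aliveL.mpr ⟨⟨hpL, ?_⟩, ?_, ?_⟩
          · intro hc
            rcases List.mem_cons.mp (List.mem_toFinset.mp hc) with h | h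
            · exact hp2ne (by rw [h])
            · exact hp2ne (by rw [List.mem_singleton.mp h])
          · by_cases hx1 : p.1 = b1
            · rw [hx1, C1]; linarith
            · rw [C4 p.1 hp1ne hx1, ← D4 p.1 hp1ne hx1]; exact hpd
          · rw [C5 p.2 hp2ne, ← D5 p.2 hp2ne]; exact hps
        have hbal2 := bal_closed hG2 (closure_of_sub (Finset.Subset.refl L2) (inr s2))
        have hbal1 := bal_closed hG1 (closure_of_sub hL1sub (inr s2))
        have hb1memCB : b1 ∈ Finset.univ.filter (fun β : B => (linkGraph L2).Reachable (inr s2) (inl β)) :=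
          Finset.mem_filter.mpr ⟨Finset.mem_univ _, hb1CB⟩
        have hL2sum : ∑ x ∈ Finset.univ.filter (fun β : B => (linkGraph L2).Reachable (inr s2) (inl β)), st2.dem x
            = (∑ x ∈ Finset.univ.filter (fun β : B => (linkGraph L2).Reachable (inr s2) (inl β)), st.dem x) + (st2.dem b1 - st.dem b1) :=
          sum_except hb1memCB
            (fun x hx hne => C4 x (fun h => hbCB (h ▸ (Finset.mem_filter.mp hx).2)) hne)
        have hR2sum : ∑ y ∈ Finset.univ.filter (fun σ : S => (linkGraph L2).Reachable (inr s2) (inr σ)), st2.sup y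
            = ∑ y ∈ Finset.univ.filter (fun σ : S => (linkGraph L2).Reachable (inr s2) (inr σ)), st.sup y :=
          Finset.sum_congr rfl fun y hy =>
            C5 y (fun h => hs1CS (h ▸ (Finset.mem_filter.mp hy).2))
        have hL1sum : ∑ x ∈ Finset.univ.filter (fun β : B => (linkGraph L2).Reachable (inr s2) (inl β)), st1.dem x
            = (∑ x ∈ Finset.univ.filter (fun β : B => (linkGraph L2).Reachable (inr s2) (inl β)), st.dem x) + (st1.dem b1 - st.dem b1) :=
          sum_except hb1memCB
            (fun x hx hne => D4 x (fun h => hbCB (h ▸ (Finset.mem_filter.mp hx).2)) hne)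
        have hR1sum : ∑ y ∈ Finset.univ.filter (fun σ : S => (linkGraph L2).Reachable (inr s2) (inr σ)), st1.sup y
            = ∑ y ∈ Finset.univ.filter (fun σ : S => (linkGraph L2).Reachable (inr s2) (inr σ)), st.sup y :=
          Finset.sum_congr rfl fun y hy =>
            D5 y (fun h => hs1CS (h ▸ (Finset.mem_filter.mp hy).2))
        rw [hL2sum, hR2sum, C1] at hbal2
        rw [hL1sum, hR1sum, D2] at hbal1
        linarith

/-! ### main induction -/

lemma main : ∀ (n : ℕ) (L : Finset (B × S)) (st : TState B S), Good L st → L.card ≤ n →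
    ∀ b s, (linkGraph L).Reachable (inl b) (inr s) → (b, s) ∈ L := by
  intro n
  induction n with
  | zero =>
    intro L st _ hcard b s h
    obtain ⟨p, hp, _⟩ := reach_seller_edge h (by simp)
    rw [Finset.card_eq_zero.mp (Nat.le_zero.mp hcard)] at hp
    exact absurd hp (Finset.notMem_empty _)
  | succ n ihn =>
    intro L st hG hcard b s hreach
    obtain ⟨w⟩ := hreach
    exact reach_mem (fun b' b1' s1' s2' h1 h2 h3 => claimC ihn hG hcard b' b1' s1' s2' h1 h2 h3)
      w.length b s w le_rfl

end StmtFive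

/-- Necessity: with strictly positive demands and supplies and component-wise
supply equal to demand, if every trading session is feasible then every
connected component is complete bipartite. -/
theorem stmt_5 {B S : Type*} [Fintype B] [Fintype S] [DecidableEq B] [DecidableEq S]
    (L : Finset (B × S)) (D : B → ℝ) (Sup : S → ℝ)
    (hD : ∀ b, 0 < D b) (hS : ∀ s, 0 < Sup s)
    (hbal : ∀ v : B ⊕ S,
      ∑ b ∈ Finset.univ.filter (fun b => (linkGraph L).Reachable v (Sum.inl b)), D b
        = ∑ s ∈ Finset.univ.filter (fun s => (linkGraph L).Reachable v (Sum.inr s)), Sup s)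
    (hsucc : ∀ seq : List (B × S), seq.Perm L.toList →
      ∀ b, (runSession ⟨D, Sup⟩ seq).dem b = 0) :
    ∀ b s, (linkGraph L).Reachable (Sum.inl b) (Sum.inr s) → (b, s) ∈ L := by

  classical
  have hglob : (∑ x, D x) = ∑ y, Sup y := by
    haveI : Fintype (linkGraph L).ConnectedComponent := Fintype.ofFinite _
    have key : ∀ c : (linkGraph L).ConnectedComponent,
        (∑ x ∈ Finset.univ.filter
            (fun b => (linkGraph L).connectedComponentMk (Sum.inl b) = c), D x)
        = ∑ y ∈ Finset.univ.filter
            (fun s => (linkGraph L).connectedComponentMk (Sum.inr s) = c), Sup y := by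
      intro c
      induction c using SimpleGraph.ConnectedComponent.ind with
      | _ v =>
        have hb := hbal v
        have e1 : Finset.univ.filter
              (fun b => (linkGraph L).connectedComponentMk (Sum.inl b)
                = (linkGraph L).connectedComponentMk v)
            = Finset.univ.filter (fun b => (linkGraph L).Reachable v (Sum.inl b)) := by
          apply Finset.filter_congr
          intro x _
          rw [SimpleGraph.ConnectedComponent.eq]
          exact ⟨fun h => h.symm, fun h => h.symm⟩
        have e2 : Finset.univ.filter
              (fun s => (linkGraph L).connectedComponentMk (Sum.inr s)
                = (linkGraph L).connectedComponentMk v)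
            = Finset.univ.filter (fun s => (linkGraph L).Reachable v (Sum.inr s)) := by
          apply Finset.filter_congr
          intro x _
          rw [SimpleGraph.ConnectedComponent.eq]
          exact ⟨fun h => h.symm, fun h => h.symm⟩
        rw [e1, e2]
        exact hb
    calc (∑ x, D x)
        = ∑ c : (linkGraph L).ConnectedComponent, ∑ x ∈ Finset.univ.filter
            (fun b => (linkGraph L).connectedComponentMk (Sum.inl b) = c), D x :=
          (Finset.sum_fiberwise _ _ _).symm
      _ = ∑ c : (linkGraph L).ConnectedComponent, ∑ y ∈ Finset.univ.filter
            (fun s => (linkGraph L).connectedComponentMk (Sum.inr s) = c), Sup y :=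
          Finset.sum_congr rfl fun c _ => key c
      _ = ∑ y, Sup y := Finset.sum_fiberwise _ _ _
  have hGood : StmtFive.Good L ⟨D, Sup⟩ :=
    ⟨⟨fun b => (hD b).le, fun s => (hS s).le⟩, fun p _ => ⟨hD p.1, hS p.2⟩, hglob, hsucc⟩
  exact fun b s h => StmtFive.main L.card L ⟨D, Sup⟩ hGood le_rfl b s h
end

section
/- Let G be a bipartite graph on finite buyer set B and seller set S with strictly positive demands and supplies such that within every connected component total supply equals total demand. Then G is successful (every trading session is feasible) if and only if every connected component of G is complete bipartite. -/
open scoped Classical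

section Basics

variable {B S : Type*} [DecidableEq B] [DecidableEq S]

def Nst (st : TState B S) : Prop := (∀ b, 0 ≤ st.dem b) ∧ (∀ s, 0 ≤ st.sup s)

lemma runSession_nil (st : TState B S) : runSession st [] = st := rfl

lemma runSession_cons (st : TState B S) (p : B × S) (σ : List (B × S)) :
    runSession st (p :: σ) = runSession (trade st p) σ := rfl

lemma runSession_append (st : TState B S) (σ ρ : List (B × S)) :
    runSession st (σ ++ ρ) = runSession (runSession st σ) ρ :=
  List.foldl_append

lemma trade_dem_self' (st : TState B S) (x : B) (y : S) :
    (trade st (x, y)).dem x = max 0 (st.dem x - st.sup y) :=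
  Function.update_self _ _ _

lemma trade_dem_ne' (st : TState B S) (x : B) (y : S) {b : B} (h : b ≠ x) :
    (trade st (x, y)).dem b = st.dem b :=
  Function.update_of_ne h _ _

lemma trade_sup_self' (st : TState B S) (x : B) (y : S) :
    (trade st (x, y)).sup y = max 0 (st.sup y - st.dem x) :=
  Function.update_self _ _ _

lemma trade_sup_ne' (st : TState B S) (x : B) (y : S) {t : S} (h : t ≠ y) :
    (trade st (x, y)).sup t = st.sup t :=
  Function.update_of_ne h _ _

lemma Nst.trade {st : TState B S} (h : Nst st) (l : B × S) : Nst (trade st l) := by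
  obtain ⟨l1, l2⟩ := l
  constructor
  · intro b
    by_cases hb : b = l1
    · subst hb; rw [trade_dem_self']; exact le_max_left _ _
    · rw [trade_dem_ne' _ _ _ hb]; exact h.1 b
  · intro s
    by_cases hs : s = l2
    · subst hs; rw [trade_sup_self']; exact le_max_left _ _
    · rw [trade_sup_ne' _ _ _ hs]; exact h.2 s

lemma Nst.run {st : TState B S} (h : Nst st) (σ : List (B × S)) :
    Nst (runSession st σ) := by
  induction σ generalizing st with
  | nil => exact h
  | cons p σ ih => rw [runSession_cons]; exact ih (h.trade p)

lemma trade_dem_le {st : TState B S} (h : Nst st) (l : B × S) (b : B) :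
    (trade st l).dem b ≤ st.dem b := by
  obtain ⟨l1, l2⟩ := l
  by_cases hb : b = l1
  · rw [hb, trade_dem_self']
    have := h.1 l1; have := h.2 l2
    rcases le_total (st.dem l1 - st.sup l2) 0 with hc | hc
    · rw [max_eq_left hc]; exact h.1 l1
    · rw [max_eq_right hc]; linarith
  · rw [trade_dem_ne' _ _ _ hb]

lemma trade_sup_le {st : TState B S} (h : Nst st) (l : B × S) (s : S) :
    (trade st l).sup s ≤ st.sup s := by
  obtain ⟨l1, l2⟩ := l
  by_cases hs : s = l2
  · rw [hs, trade_sup_self']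
    have := h.1 l1; have := h.2 l2
    rcases le_total (st.sup l2 - st.dem l1) 0 with hc | hc
    · rw [max_eq_left hc]; exact h.2 l2
    · rw [max_eq_right hc]; linarith
  · rw [trade_sup_ne' _ _ _ hs]

lemma run_dem_le {st : TState B S} (h : Nst st) (σ : List (B × S)) (b : B) :
    (runSession st σ).dem b ≤ st.dem b := by
  induction σ generalizing st with
  | nil => exact le_rfl
  | cons p σ ih =>
    rw [runSession_cons]
    exact le_trans (ih (h.trade p)) (trade_dem_le h p b)

lemma run_sup_le {st : TState B S} (h : Nst st) (σ : List (B × S)) (s : S) :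
    (runSession st σ).sup s ≤ st.sup s := by
  induction σ generalizing st with
  | nil => exact le_rfl
  | cons p σ ih =>
    rw [runSession_cons]
    exact le_trans (ih (h.trade p)) (trade_sup_le h p s)

lemma run_dem_zero {st : TState B S} (h : Nst st) {b : B} (hb : st.dem b = 0)
    (σ : List (B × S)) : (runSession st σ).dem b = 0 :=
  le_antisymm (hb ▸ run_dem_le h σ b) ((h.run σ).1 b)

lemma run_sup_zero {st : TState B S} (h : Nst st) {s : S} (hs : st.sup s = 0)
    (σ : List (B × S)) : (runSession st σ).sup s = 0 :=
  le_antisymm (hs ▸ run_sup_le h σ s) ((h.run σ).2 s)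

lemma run_dem_untouched (σ : List (B × S)) (st : TState B S) (b : B)
    (h : ∀ p ∈ σ, p.1 ≠ b) : (runSession st σ).dem b = st.dem b := by
  induction σ generalizing st with
  | nil => rfl
  | cons p σ ih =>
    rw [runSession_cons, ih _ (fun q hq => h q (List.mem_cons_of_mem _ hq))]
    obtain ⟨p1, p2⟩ := p
    exact trade_dem_ne' _ _ _ (fun hb => (h (p1,p2) (List.mem_cons_self)) hb.symm)

lemma run_sup_untouched (σ : List (B × S)) (st : TState B S) (t : S)
    (h : ∀ p ∈ σ, p.2 ≠ t) : (runSession st σ).sup t = st.sup t := by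
  induction σ generalizing st with
  | nil => rfl
  | cons p σ ih =>
    rw [runSession_cons, ih _ (fun q hq => h q (List.mem_cons_of_mem _ hq))]
    obtain ⟨p1, p2⟩ := p
    exact trade_sup_ne' _ _ _ (fun hs => (h (p1,p2) (List.mem_cons_self)) hs.symm)

lemma run_dem_starved (σ : List (B × S)) (st : TState B S) (hnn : Nst st)
    (b : B) (t : S) (ht : st.sup t = 0) (h : ∀ p ∈ σ, p.1 = b → p.2 = t) :
    (runSession st σ).dem b = st.dem b := by
  induction σ generalizing st with
  | nil => rfl
  | cons p σ ih =>
    obtain ⟨p1, p2⟩ := p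
    rw [runSession_cons]
    have ht' : (trade st (p1,p2)).sup t = 0 := by
      by_cases hp : t = p2
      · subst hp
        rw [trade_sup_self', ht]
        rw [max_eq_left (by linarith [hnn.1 p1])]
      · rw [trade_sup_ne' _ _ _ hp]; exact ht
    have hd : (trade st (p1,p2)).dem b = st.dem b := by
      by_cases hp : b = p1
      · subst hp
        have hp2 : p2 = t := h (b, p2) (List.mem_cons_self) rfl
        subst hp2
        rw [trade_dem_self', ht, sub_zero, max_eq_right (hnn.1 b)]
      · exact trade_dem_ne' _ _ _ hp
    rw [ih _ (hnn.trade _) ht' (fun q hq => h q (List.mem_cons_of_mem _ hq)), hd]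

lemma run_sup_starved (σ : List (B × S)) (st : TState B S) (hnn : Nst st)
    (u : B) (s : S) (hu : st.dem u = 0) (h : ∀ p ∈ σ, p.2 = s → p.1 = u) :
    (runSession st σ).sup s = st.sup s := by
  induction σ generalizing st with
  | nil => rfl
  | cons p σ ih =>
    obtain ⟨p1, p2⟩ := p
    rw [runSession_cons]
    have hu' : (trade st (p1,p2)).dem u = 0 := by
      by_cases hp : u = p1
      · subst hp
        rw [trade_dem_self', hu]
        rw [max_eq_left (by linarith [hnn.2 p2])]
      · rw [trade_dem_ne' _ _ _ hp]; exact hu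
    have hd : (trade st (p1,p2)).sup s = st.sup s := by
      by_cases hp : s = p2
      · subst hp
        have hp1 : p1 = u := h (p1, s) (List.mem_cons_self) rfl
        subst hp1
        rw [trade_sup_self', hu, sub_zero, max_eq_right (hnn.2 s)]
      · exact trade_sup_ne' _ _ _ hp
    rw [ih _ (hnn.trade _) hu' (fun q hq => h q (List.mem_cons_of_mem _ hq)), hd]

lemma min_zero_mem (σ : List (B × S)) (st : TState B S) (hnn : Nst st)
    {l : B × S} (hl : l ∈ σ) :
    (runSession st σ).dem l.1 = 0 ∨ (runSession st σ).sup l.2 = 0 := by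
  induction σ generalizing st with
  | nil => exact absurd hl List.not_mem_nil
  | cons p σ ih =>
    rw [runSession_cons]
    rcases List.mem_cons.mp hl with rfl | hl'
    · obtain ⟨l1, l2⟩ := l
      rcases le_total (st.dem l1) (st.sup l2) with hc | hc
      · left
        apply run_dem_zero (hnn.trade _) _ σ
        rw [trade_dem_self', max_eq_left (by linarith)]
      · right
        apply run_sup_zero (hnn.trade _) _ σ
        rw [trade_sup_self', max_eq_left (by linarith)]
    · exact ih (trade st p) (hnn.trade p) hl'

end Basics

section Part2

variable {B S : Type*} [DecidableEq B] [DecidableEq S]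

lemma max0_sub_min (d s : ℝ) : max 0 (d - s) = d - min d s := by
  rcases le_total d s with h | h
  · rw [min_eq_left h, max_eq_left (by linarith), sub_self]
  · rw [min_eq_right h, max_eq_right (by linarith)]

lemma aux_pos {d c : ℝ} (hd : 0 < d) (hc : 0 < c) :
    0 < max 0 (d - max 0 (d - c)) := by
  rcases le_total d c with h | h
  · rw [max_eq_left (by linarith : d - c ≤ 0), sub_zero, max_eq_right hd.le]; exact hd
  · rw [max_eq_right (by linarith : (0:ℝ) ≤ d - c)]
    have : d - (d - c) = c := by ring
    rw [this, max_eq_right hc.le]; exact hc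

lemma aux_ineq1 {a bb g : ℝ} (ha : 0 < a) (h : max 0 (a - max 0 (g - bb)) = 0) :
    a + bb ≤ g := by
  have h1 : a - max 0 (g - bb) ≤ 0 := by
    have := le_max_right 0 (a - max 0 (g - bb)); rw [h] at this; exact this
  have h2 : 0 < max 0 (g - bb) := by linarith
  have h3 : max 0 (g - bb) = g - bb := by
    rcases le_total (g - bb) 0 with hc | hc
    · rw [max_eq_left hc] at h2; exact absurd h2 (lt_irrefl _)
    · exact max_eq_right hc
  rw [h3] at h1; linarith

lemma aux_ineq2 {a bb g : ℝ} (h : max 0 (max 0 (g - a) - bb) = 0) :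
    g ≤ a + bb := by
  have h1 : max 0 (g - a) - bb ≤ 0 := by
    have := le_max_right 0 (max 0 (g - a) - bb); rw [h] at this; exact this
  have h2 : g - a ≤ max 0 (g - a) := le_max_right _ _
  linarith

/-- Conservation: if the link set is "closed" w.r.t. `U, V`, the difference of sums
is invariant under the session. -/
lemma invariant (U : Finset B) (V : Finset S) :
    ∀ (seq : List (B × S)) (st : TState B S), (∀ p ∈ seq, (p.1 ∈ U ↔ p.2 ∈ V)) →
    (∑ x ∈ U, (runSession st seq).dem x) - (∑ y ∈ V, (runSession st seq).sup y)
      = (∑ x ∈ U, st.dem x) - ∑ y ∈ V, st.sup y := by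
  intro seq
  induction seq with
  | nil => intro st h; rfl
  | cons p σ ih =>
    intro st h
    rw [runSession_cons]
    rw [ih (trade st p) (fun q hq => h q (List.mem_cons_of_mem _ hq))]
    obtain ⟨p1, p2⟩ := p
    have hiff := h (p1, p2) (List.mem_cons_self)
    by_cases hp : p1 ∈ U
    · have hq : p2 ∈ V := hiff.mp hp
      have e1 : (∑ x ∈ U, (trade st (p1,p2)).dem x)
          = max 0 (st.dem p1 - st.sup p2) + ∑ x ∈ U.erase p1, st.dem x := by
        have : (trade st (p1,p2)).dem
            = Function.update st.dem p1 (max 0 (st.dem p1 - st.sup p2)) := rfl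
        rw [this, Finset.sum_update_of_mem hp, Finset.sdiff_singleton_eq_erase]
      have e2 : (∑ y ∈ V, (trade st (p1,p2)).sup y)
          = max 0 (st.sup p2 - st.dem p1) + ∑ y ∈ V.erase p2, st.sup y := by
        have : (trade st (p1,p2)).sup
            = Function.update st.sup p2 (max 0 (st.sup p2 - st.dem p1)) := rfl
        rw [this, Finset.sum_update_of_mem hq, Finset.sdiff_singleton_eq_erase]
      have e3 : (∑ x ∈ U, st.dem x) = st.dem p1 + ∑ x ∈ U.erase p1, st.dem x :=
        (Finset.add_sum_erase _ _ hp).symm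
      have e4 : (∑ y ∈ V, st.sup y) = st.sup p2 + ∑ y ∈ V.erase p2, st.sup y :=
        (Finset.add_sum_erase _ _ hq).symm
      rw [e1, e2, e3, e4, max0_sub_min, max0_sub_min, min_comm (st.sup p2) (st.dem p1)]
      ring
    · have hq : p2 ∉ V := fun hq => hp (hiff.mpr hq)
      have e1 : (∑ x ∈ U, (trade st (p1,p2)).dem x) = ∑ x ∈ U, st.dem x := by
        have : (trade st (p1,p2)).dem
            = Function.update st.dem p1 (max 0 (st.dem p1 - st.sup p2)) := rfl
        rw [this, Finset.sum_update_of_notMem hp]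
      have e2 : (∑ y ∈ V, (trade st (p1,p2)).sup y) = ∑ y ∈ V, st.sup y := by
        have : (trade st (p1,p2)).sup
            = Function.update st.sup p2 (max 0 (st.sup p2 - st.dem p1)) := rfl
        rw [this, Finset.sum_update_of_notMem hq]
      rw [e1, e2]

/-- "Good⁺": every session (permutation of the links) zeroes out all demands and
all supplies. -/
def goodP (L : Finset (B × S)) (st : TState B S) : Prop :=
  ∀ seq : List (B × S), seq.Perm L.toList →
    (∀ b, (runSession st seq).dem b = 0) ∧ (∀ s, (runSession st seq).sup s = 0)

lemma perm_cons_erase {L : Finset (B × S)} {l : B × S} (hl : l ∈ L) :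
    (l :: (L.erase l).toList).Perm L.toList := by
  rw [← Multiset.coe_eq_coe]
  have h1 : ((l :: (L.erase l).toList : List (B × S)) : Multiset (B × S))
      = l ::ₘ (L.erase l).val := by
    rw [← Multiset.cons_coe, Finset.coe_toList]
  rw [h1, Finset.coe_toList, Finset.erase_val,
    Multiset.cons_erase (Finset.mem_val.mpr hl)]

lemma perm_cons_cons {L : Finset (B × S)} {l1 l2 : B × S} (h1 : l1 ∈ L) (h2 : l2 ∈ L)
    (hne : l2 ≠ l1) :
    (l1 :: l2 :: ((L.erase l1).erase l2).toList).Perm L.toList := by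
  rw [← Multiset.coe_eq_coe]
  have e1 : ((l1 :: l2 :: ((L.erase l1).erase l2).toList : List (B × S)) : Multiset (B × S))
      = l1 ::ₘ l2 ::ₘ ((L.erase l1).erase l2).val := by
    rw [← Multiset.cons_coe, ← Multiset.cons_coe, Finset.coe_toList]
  rw [e1, Finset.coe_toList]
  have h2' : l2 ∈ L.erase l1 := Finset.mem_erase.mpr ⟨hne, h2⟩
  rw [Finset.erase_val, Multiset.cons_erase (Finset.mem_val.mpr h2')]
  rw [Finset.erase_val, Multiset.cons_erase (Finset.mem_val.mpr h1)]

lemma run_stationary (ρ : List (B × S)) (st : TState B S) (hnn : Nst st)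
    (h : ∀ p ∈ ρ, st.dem p.1 = 0 ∨ st.sup p.2 = 0) :
    (runSession st ρ).dem = st.dem ∧ (runSession st ρ).sup = st.sup := by
  induction ρ generalizing st with
  | nil => exact ⟨rfl, rfl⟩
  | cons p ρ ih =>
    obtain ⟨p1, p2⟩ := p
    have hdem : (trade st (p1,p2)).dem = st.dem := by
      funext x
      by_cases hx : x = p1
      · rw [hx, trade_dem_self']
        rcases h (p1,p2) (List.mem_cons_self) with h0 | h0
        · rw [h0]; rw [max_eq_left (by linarith [hnn.2 p2])]
        · rw [h0, sub_zero, max_eq_right (hnn.1 p1)]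
      · exact trade_dem_ne' _ _ _ hx
    have hsup : (trade st (p1,p2)).sup = st.sup := by
      funext y
      by_cases hy : y = p2
      · rw [hy, trade_sup_self']
        rcases h (p1,p2) (List.mem_cons_self) with h0 | h0
        · rw [h0, sub_zero, max_eq_right (hnn.2 p2)]
        · rw [h0]; rw [max_eq_left (by linarith [hnn.1 p1])]
      · exact trade_sup_ne' _ _ _ hy
    have hnn' : Nst (trade st (p1,p2)) := hnn.trade _
    have h' : ∀ q ∈ ρ, (trade st (p1,p2)).dem q.1 = 0 ∨ (trade st (p1,p2)).sup q.2 = 0 := by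
      intro q hq; rw [hdem, hsup]; exact h q (List.mem_cons_of_mem _ hq)
    obtain ⟨ihd, ihs⟩ := ih (trade st (p1,p2)) hnn' h'
    rw [runSession_cons]
    exact ⟨by rw [ihd, hdem], by rw [ihs, hsup]⟩

/-- Goodness descends to the reduced instance after one trade (removing links with
a dead endpoint). -/
lemma reduce {L : Finset (B × S)} {st : TState B S} (hnn : Nst st) {l : B × S}
    (hl : l ∈ L) (hg : goodP L st) :
    goodP ((L.erase l).filter
      (fun p => 0 < (trade st l).dem p.1 ∧ 0 < (trade st l).sup p.2)) (trade st l) := by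
  intro σ hσ
  set st' := trade st l with hst'
  set L' := (L.erase l).filter (fun p => 0 < st'.dem p.1 ∧ 0 < st'.sup p.2) with hL'
  set R := (L.erase l) \ L' with hR
  have hperm : (l :: (σ ++ R.toList)).Perm L.toList := by
    rw [← Multiset.coe_eq_coe]
    have e1 : ((l :: (σ ++ R.toList) : List (B × S)) : Multiset (B × S))
        = l ::ₘ ((σ : Multiset (B × S)) + R.val) := by
      rw [← Multiset.cons_coe, ← Multiset.coe_add, Finset.coe_toList]
    have e2 : (σ : Multiset (B × S)) = L'.val := by
      rw [Multiset.coe_eq_coe.mpr hσ, Finset.coe_toList]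
    rw [e1, e2, Finset.coe_toList]
    have hsub : L' ⊆ L.erase l := Finset.filter_subset _ _
    have e3 : L'.val + R.val = (L.erase l).val := by
      rw [hR, Finset.sdiff_val]
      exact add_tsub_cancel_of_le (Finset.val_le_iff.mpr hsub)
    rw [e3, Finset.erase_val, Multiset.cons_erase (Finset.mem_val.mpr hl)]
  have hfin := hg _ hperm
  have hrun : runSession st (l :: (σ ++ R.toList))
      = runSession (runSession st' σ) R.toList := by
    rw [runSession_cons, runSession_append]
  have hnn' : Nst st' := hnn.trade l
  have hnnσ : Nst (runSession st' σ) := hnn'.run σ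
  have hdead : ∀ p ∈ R.toList, (runSession st' σ).dem p.1 = 0 ∨ (runSession st' σ).sup p.2 = 0 := by
    intro p hp
    have hpR : p ∈ R := Finset.mem_toList.mp hp
    have hpE : p ∈ L.erase l := (Finset.mem_sdiff.mp hpR).1
    have hpN : p ∉ L' := (Finset.mem_sdiff.mp hpR).2
    have : ¬(0 < st'.dem p.1 ∧ 0 < st'.sup p.2) := by
      intro hc; exact hpN (Finset.mem_filter.mpr ⟨hpE, hc⟩)
    rcases not_and_or.mp this with h0 | h0
    · left
      have : st'.dem p.1 = 0 := le_antisymm (not_lt.mp h0) (hnn'.1 _)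
      exact run_dem_zero hnn' this σ
    · right
      have : st'.sup p.2 = 0 := le_antisymm (not_lt.mp h0) (hnn'.2 _)
      exact run_sup_zero hnn' this σ
  obtain ⟨hds, hss⟩ := run_stationary R.toList (runSession st' σ) hnnσ hdead
  constructor
  · intro b
    have := hfin.1 b
    rw [hrun, hds] at this; exact this
  · intro s
    have := hfin.2 s
    rw [hrun, hss] at this; exact this

lemma adj_of_mem {L : Finset (B × S)} {p : B × S} (hp : p ∈ L) :
    (linkGraph L).Adj (Sum.inl p.1) (Sum.inr p.2) :=
  ⟨p, hp, Or.inl ⟨rfl, rfl⟩⟩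

lemma adj_inl {L : Finset (B × S)} {b : B} {v : B ⊕ S}
    (h : (linkGraph L).Adj (Sum.inl b) v) : ∃ t, v = Sum.inr t ∧ (b, t) ∈ L := by
  obtain ⟨p, hp, ⟨h1, h2⟩ | ⟨h1, h2⟩⟩ := h
  · refine ⟨p.2, h2, ?_⟩
    have : b = p.1 := Sum.inl.inj h1
    rw [this]; exact hp
  · exact absurd h1 (by simp)

lemma adj_inr {L : Finset (B × S)} {t : S} {v : B ⊕ S}
    (h : (linkGraph L).Adj (Sum.inr t) v) : ∃ u, v = Sum.inl u ∧ (u, t) ∈ L := by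
  obtain ⟨p, hp, ⟨h1, h2⟩ | ⟨h1, h2⟩⟩ := h
  · exact absurd h1 (by simp)
  · refine ⟨p.1, h2, ?_⟩
    have : t = p.2 := Sum.inr.inj h1
    rw [this]; exact hp

lemma reach3 {M : Finset (B × S)} {a u : B} {t z : S}
    (h1 : (a, t) ∈ M) (h2 : (u, t) ∈ M) (h3 : (u, z) ∈ M) :
    (linkGraph M).Reachable (Sum.inl a) (Sum.inr z) := by
  have a1 : (linkGraph M).Adj (Sum.inl a) (Sum.inr t) := adj_of_mem h1
  have a2 : (linkGraph M).Adj (Sum.inl u) (Sum.inr t) := adj_of_mem h2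
  have a3 : (linkGraph M).Adj (Sum.inl u) (Sum.inr z) := adj_of_mem h3
  exact a1.reachable.trans (a2.symm.reachable.trans a3.reachable)

end Part2

section Main

variable {B S : Type*} [DecidableEq B] [DecidableEq S]

lemma Qmain : ∀ (n : ℕ) (L : Finset (B × S)) (st : TState B S),
    L.card ≤ n → Nst st → (∀ p ∈ L, 0 < st.dem p.1 ∧ 0 < st.sup p.2) → goodP L st →
    ∀ b s, (linkGraph L).Reachable (Sum.inl b) (Sum.inr s) → (b, s) ∈ L := by
  intro n
  induction n with
  | zero =>
    intro L st hcard _ _ _ b s hr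
    obtain ⟨w⟩ := hr
    cases w with
    | cons h p =>
      obtain ⟨q, hq, _⟩ := h
      have hLe : L = ∅ := Finset.card_eq_zero.mp (Nat.le_zero.mp hcard)
      rw [hLe] at hq
      exact absurd hq (Finset.notMem_empty q)
  | succ n IH =>
    intro L st hcard hnn hpos hgood b s hr
    obtain ⟨w⟩ := hr
    suffices key : ∀ (m : ℕ) (b : B) (w : (linkGraph L).Walk (Sum.inl b) (Sum.inr s)),
        w.length ≤ m → (b, s) ∈ L by
      exact key w.length b w le_rfl
    intro m
    induction m with
    | zero =>
      intro b w hw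
      cases w with
      | cons h p =>
        simp only [SimpleGraph.Walk.length_cons] at hw
        omega
    | succ m ihm =>
      intro b w hw
      cases w with
      | cons h p =>
        obtain ⟨t1, rfl, hbt1⟩ := adj_inl h
        cases p with
        | nil => exact hbt1
        | cons h2 p2 =>
          obtain ⟨u1, rfl, hut1⟩ := adj_inr h2
          have hus : (u1, s) ∈ L := by
            apply ihm u1 p2
            simp only [SimpleGraph.Walk.length_cons] at hw
            omega
          by_contra hbs
          have hbu : b ≠ u1 := by rintro rfl; exact hbs hus
          have hts : t1 ≠ s := by rintro rfl; exact hbs hbt1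
          have hα : 0 < st.dem b := (hpos _ hbt1).1
          have hγ : 0 < st.sup t1 := (hpos _ hbt1).2
          have hβ : 0 < st.dem u1 := (hpos _ hut1).1
          have hδ : 0 < st.sup s := (hpos _ hus).2
          set L' : (B × S) → Finset (B × S) := fun l =>
            (L.erase l).filter
              (fun p => 0 < (trade st l).dem p.1 ∧ 0 < (trade st l).sup p.2) with hL'def
          have hL'sub : ∀ l, L' l ⊆ L := fun l =>
            (Finset.filter_subset _ _).trans (Finset.erase_subset _ _)
          have red : ∀ l ∈ L, ∀ (b' : B) (s' : S),
              (linkGraph (L' l)).Reachable (Sum.inl b') (Sum.inr s') → (b', s') ∈ L := by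
            intro l hl b' s' hr'
            have hc1 : (L' l).card ≤ n := by
              have h1 : (L' l).card ≤ (L.erase l).card :=
                Finset.card_le_card (Finset.filter_subset _ _)
              have h2 : (L.erase l).card = L.card - 1 := Finset.card_erase_of_mem hl
              have h3 : 0 < L.card := Finset.card_pos.mpr ⟨l, hl⟩
              omega
            exact hL'sub l (IH (L' l) (trade st l) hc1 (hnn.trade l)
              (fun p hp => (Finset.mem_filter.mp hp).2) (reduce hnn hl hgood) b' s' hr')
          have memL' : ∀ (l p : B × S), p ∈ L → p.1 ≠ l.1 → p.2 ≠ l.2 → p ∈ L' l := by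
            intro l p hp h1 h2
            refine Finset.mem_filter.mpr ⟨Finset.mem_erase.mpr ⟨?_, hp⟩, ?_, ?_⟩
            · intro he; rw [he] at h1; exact h1 rfl
            · obtain ⟨l1, l2⟩ := l
              rw [trade_dem_ne' _ _ _ h1]; exact (hpos p hp).1
            · obtain ⟨l1, l2⟩ := l
              rw [trade_sup_ne' _ _ _ h2]; exact (hpos p hp).2
          have hINC : ∀ p ∈ L, p.1 = b ∨ p.1 = u1 ∨ p.2 = t1 ∨ p.2 = s := by
            intro p hp
            by_contra hcon
            push_neg at hcon
            obtain ⟨h1, h2, h3, h4⟩ := hcon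
            apply hbs
            refine red p hp b s (reach3 (t := t1) (u := u1) ?_ ?_ ?_)
            · exact memL' p (b, t1) hbt1 (Ne.symm h1) (Ne.symm h3)
            · exact memL' p (u1, t1) hut1 (Ne.symm h2) (Ne.symm h3)
            · exact memL' p (u1, s) hus (Ne.symm h2) (Ne.symm h4)
          have hW1 : ∀ x, (x, t1) ∈ L → x ≠ b → x ≠ u1 → st.sup t1 ≤ st.dem x := by
            intro x hx hxb hxu
            by_contra hlt
            push_neg at hlt
            apply hbs
            have hsup' : 0 < (trade st (x, t1)).sup t1 := by
              rw [trade_sup_self']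
              have hh : 0 < st.sup t1 - st.dem x := by linarith
              exact lt_of_lt_of_le hh (le_max_right _ _)
            refine red (x, t1) hx b s (reach3 (t := t1) (u := u1) ?_ ?_ ?_)
            · refine Finset.mem_filter.mpr ⟨Finset.mem_erase.mpr ⟨?_, hbt1⟩, ?_, hsup'⟩
              · intro he; exact hxb (congrArg Prod.fst he).symm
              · rw [trade_dem_ne' _ _ _ (Ne.symm hxb)]; exact hα
            · refine Finset.mem_filter.mpr ⟨Finset.mem_erase.mpr ⟨?_, hut1⟩, ?_, hsup'⟩
              · intro he; exact hxu (congrArg Prod.fst he).symm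
              · rw [trade_dem_ne' _ _ _ (Ne.symm hxu)]; exact hβ
            · exact memL' (x, t1) (u1, s) hus (Ne.symm hxu) (Ne.symm hts)
          have hW2 : ∀ x, (x, s) ∈ L → x ≠ u1 → st.sup s ≤ st.dem x := by
            intro x hx hxu
            have hxb : x ≠ b := by rintro rfl; exact hbs hx
            by_contra hlt
            push_neg at hlt
            apply hbs
            have hsup' : 0 < (trade st (x, s)).sup s := by
              rw [trade_sup_self']
              have hh : 0 < st.sup s - st.dem x := by linarith
              exact lt_of_lt_of_le hh (le_max_right _ _)
            refine red (x, s) hx b s (reach3 (t := t1) (u := u1) ?_ ?_ ?_)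
            · exact memL' (x, s) (b, t1) hbt1 (Ne.symm hxb) hts
            · exact memL' (x, s) (u1, t1) hut1 (Ne.symm hxu) hts
            · refine Finset.mem_filter.mpr ⟨Finset.mem_erase.mpr ⟨?_, hus⟩, ?_, hsup'⟩
              · intro he; exact hxu (congrArg Prod.fst he).symm
              · rw [trade_dem_ne' _ _ _ (Ne.symm hxu)]; exact hβ
          have hW3 : ∀ y, (b, y) ∈ L → y ≠ t1 → st.dem b ≤ st.sup y := by
            intro y hy hyt
            have hys : y ≠ s := by rintro rfl; exact hbs hy
            by_contra hlt
            push_neg at hlt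
            apply hbs
            have hdem' : 0 < (trade st (b, y)).dem b := by
              rw [trade_dem_self']
              have hh : 0 < st.dem b - st.sup y := by linarith
              exact lt_of_lt_of_le hh (le_max_right _ _)
            refine red (b, y) hy b s (reach3 (t := t1) (u := u1) ?_ ?_ ?_)
            · refine Finset.mem_filter.mpr ⟨Finset.mem_erase.mpr ⟨?_, hbt1⟩, hdem', ?_⟩
              · intro he; exact hyt (congrArg Prod.snd he).symm
              · rw [trade_sup_ne' _ _ _ (Ne.symm hyt)]; exact hγ
            · exact memL' (b, y) (u1, t1) hut1 (Ne.symm hbu) (Ne.symm hyt)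
            · exact memL' (b, y) (u1, s) hus (Ne.symm hbu) (Ne.symm hys)
          have hW4 : ∀ y, (u1, y) ∈ L → y ≠ t1 → y ≠ s → st.dem u1 ≤ st.sup y := by
            intro y hy hyt hys
            by_contra hlt
            push_neg at hlt
            apply hbs
            have hdem' : 0 < (trade st (u1, y)).dem u1 := by
              rw [trade_dem_self']
              have hh : 0 < st.dem u1 - st.sup y := by linarith
              exact lt_of_lt_of_le hh (le_max_right _ _)
            refine red (u1, y) hy b s (reach3 (t := t1) (u := u1) ?_ ?_ ?_)
            · exact memL' (u1, y) (b, t1) hbt1 hbu (Ne.symm hyt)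
            · refine Finset.mem_filter.mpr ⟨Finset.mem_erase.mpr ⟨?_, hut1⟩, hdem', ?_⟩
              · intro he; exact hyt (congrArg Prod.snd he).symm
              · rw [trade_sup_ne' _ _ _ (Ne.symm hyt)]; exact hγ
            · refine Finset.mem_filter.mpr ⟨Finset.mem_erase.mpr ⟨?_, hus⟩, hdem', ?_⟩
              · intro he; exact hys (congrArg Prod.snd he).symm
              · rw [trade_sup_ne' _ _ _ (Ne.symm hys)]; exact hδ
          have hR1 : ∀ x, (x, t1) ∈ L → x ≠ b → x ≠ u1 →
              (∀ y, (b, y) ∈ L → y = t1) → False := by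
            intro x hx hxb hxu hY0
            have hperm := perm_cons_erase hx
            have hzero := (hgood _ hperm).1 b
            rw [runSession_cons] at hzero
            have hsup0 : (trade st (x, t1)).sup t1 = 0 := by
              rw [trade_sup_self']
              have := hW1 x hx hxb hxu
              exact max_eq_left (by linarith)
            have hfin : (runSession (trade st (x, t1)) (L.erase (x, t1)).toList).dem b
                = (trade st (x, t1)).dem b := by
              apply run_dem_starved _ _ (hnn.trade _) b t1 hsup0
              intro p hp hp1
              have hpL : p ∈ L := (Finset.erase_subset _ _) (Finset.mem_toList.mp hp)
              have hbp : (b, p.2) ∈ L := by rw [← hp1, Prod.mk.eta]; exact hpL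
              exact hY0 p.2 hbp
            rw [hfin, trade_dem_ne' _ _ _ (Ne.symm hxb)] at hzero
            exact absurd hzero (ne_of_gt hα)
          have hR2 : ∀ y, (u1, y) ∈ L → y ≠ t1 → y ≠ s →
              (∀ x, (x, s) ∈ L → x = u1) → False := by
            intro y hy hyt hys hX2
            have hperm := perm_cons_erase hy
            have hzero := (hgood _ hperm).2 s
            rw [runSession_cons] at hzero
            have hdem0 : (trade st (u1, y)).dem u1 = 0 := by
              rw [trade_dem_self']
              have := hW4 y hy hyt hys
              exact max_eq_left (by linarith)
            have hfin : (runSession (trade st (u1, y)) (L.erase (u1, y)).toList).sup s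
                = (trade st (u1, y)).sup s := by
              apply run_sup_starved _ _ (hnn.trade _) u1 s hdem0
              intro p hp hp2
              have hpL : p ∈ L := (Finset.erase_subset _ _) (Finset.mem_toList.mp hp)
              have hbp : (p.1, s) ∈ L := by rw [← hp2, Prod.mk.eta]; exact hpL
              exact hX2 p.1 hbp
            rw [hfin, trade_sup_ne' _ _ _ (Ne.symm hys)] at hzero
            exact absurd hzero (ne_of_gt hδ)
          have hY1 : ∀ y, (u1, y) ∈ L → y = t1 ∨ y = s := by
            intro y1 hy1
            by_contra hcon
            push_neg at hcon
            obtain ⟨hyt, hys⟩ := hcon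
            by_cases hX2 : ∀ x, (x, s) ∈ L → x = u1
            · exact hR2 y1 hy1 hyt hys hX2
            · push_neg at hX2
              obtain ⟨x2, hx2, hx2u⟩ := hX2
              have hx2b : x2 ≠ b := by rintro rfl; exact hbs hx2
              have hby1 : (b, y1) ∈ L := by
                refine red (x2, s) hx2 b y1 (reach3 (t := t1) (u := u1) ?_ ?_ ?_)
                · exact memL' (x2, s) (b, t1) hbt1 (Ne.symm hx2b) hts
                · exact memL' (x2, s) (u1, t1) hut1 (Ne.symm hx2u) hts
                · exact memL' (x2, s) (u1, y1) hy1 (Ne.symm hx2u) hys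
              have hx2t1 : (x2, t1) ∈ L := by
                refine red (b, y1) hby1 x2 t1 (reach3 (t := s) (u := u1) ?_ ?_ ?_)
                · exact memL' (b, y1) (x2, s) hx2 hx2b (Ne.symm hys)
                · exact memL' (b, y1) (u1, s) hus (Ne.symm hbu) (Ne.symm hys)
                · exact memL' (b, y1) (u1, t1) hut1 (Ne.symm hbu) (Ne.symm hyt)
              apply hbs
              refine red (u1, y1) hy1 b s (reach3 (t := t1) (u := x2) ?_ ?_ ?_)
              · exact memL' (u1, y1) (b, t1) hbt1 hbu (Ne.symm hyt)
              · exact memL' (u1, y1) (x2, t1) hx2t1 hx2u (Ne.symm hyt)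
              · exact memL' (u1, y1) (x2, s) hx2 hx2u (Ne.symm hys)
          have hX1 : ∀ x, (x, t1) ∈ L → x = b ∨ x = u1 := by
            intro x1 hx1
            by_contra hcon
            push_neg at hcon
            obtain ⟨hxb, hxu⟩ := hcon
            by_cases hY0 : ∀ y, (b, y) ∈ L → y = t1
            · exact hR1 x1 hx1 hxb hxu hY0
            · push_neg at hY0
              obtain ⟨y0, hy0, hy0t⟩ := hY0
              have hy0s : y0 ≠ s := by rintro rfl; exact hbs hy0
              have hx1s : (x1, s) ∈ L := by
                refine red (b, y0) hy0 x1 s (reach3 (t := t1) (u := u1) ?_ ?_ ?_)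
                · exact memL' (b, y0) (x1, t1) hx1 hxb (Ne.symm hy0t)
                · exact memL' (b, y0) (u1, t1) hut1 (Ne.symm hbu) (Ne.symm hy0t)
                · exact memL' (b, y0) (u1, s) hus (Ne.symm hbu) (Ne.symm hy0s)
              have huy0 : (u1, y0) ∈ L := by
                refine red (x1, s) hx1s u1 y0 (reach3 (t := t1) (u := b) ?_ ?_ ?_)
                · exact memL' (x1, s) (u1, t1) hut1 (Ne.symm hxu) hts
                · exact memL' (x1, s) (b, t1) hbt1 (Ne.symm hxb) hts
                · exact memL' (x1, s) (b, y0) hy0 (Ne.symm hxb) hy0s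
              rcases hY1 y0 huy0 with h | h
              · exact hy0t h
              · exact hy0s h
          -- global balance
          have hclos : ∀ p ∈ L.toList,
              (p.1 ∈ L.image Prod.fst ↔ p.2 ∈ L.image Prod.snd) := by
            intro p hp
            have hpL := Finset.mem_toList.mp hp
            constructor
            · intro _; exact Finset.mem_image.mpr ⟨p, hpL, rfl⟩
            · intro _; exact Finset.mem_image.mpr ⟨p, hpL, rfl⟩
          have hbal0 := invariant (L.image Prod.fst) (L.image Prod.snd) L.toList st hclos
          have hzs := hgood L.toList (List.Perm.refl _)
          have hzd : ∑ x ∈ L.image Prod.fst, (runSession st L.toList).dem x = 0 :=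
            Finset.sum_eq_zero (fun x _ => hzs.1 x)
          have hzs2 : ∑ y ∈ L.image Prod.snd, (runSession st L.toList).sup y = 0 :=
            Finset.sum_eq_zero (fun y _ => hzs.2 y)
          rw [hzd, hzs2] at hbal0
          have hbal : ∑ x ∈ L.image Prod.fst, st.dem x
              = ∑ y ∈ L.image Prod.snd, st.sup y := by linarith
          by_cases hX2e : ∀ x, (x, s) ∈ L → x = u1
          · by_cases hY0e : ∀ y, (b, y) ∈ L → y = t1
            · -- CASE (c)
              rcases le_or_gt (st.sup t1) (st.dem u1) with hcase | hcase
              · have hperm := perm_cons_erase hut1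
                have hzero := (hgood _ hperm).1 b
                rw [runSession_cons] at hzero
                have hsup0 : (trade st (u1, t1)).sup t1 = 0 := by
                  rw [trade_sup_self']; exact max_eq_left (by linarith)
                have hfin : (runSession (trade st (u1, t1)) (L.erase (u1, t1)).toList).dem b
                    = (trade st (u1, t1)).dem b := by
                  apply run_dem_starved _ _ (hnn.trade _) b t1 hsup0
                  intro p hp hp1
                  have hpL : p ∈ L := (Finset.erase_subset _ _) (Finset.mem_toList.mp hp)
                  have hbp : (b, p.2) ∈ L := by rw [← hp1, Prod.mk.eta]; exact hpL
                  exact hY0e p.2 hbp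
                rw [hfin, trade_dem_ne' _ _ _ hbu] at hzero
                exact absurd hzero (ne_of_gt hα)
              · have hperm := perm_cons_erase hut1
                have hzero := (hgood _ hperm).2 s
                rw [runSession_cons] at hzero
                have hdem0 : (trade st (u1, t1)).dem u1 = 0 := by
                  rw [trade_dem_self']; exact max_eq_left (by linarith)
                have hfin : (runSession (trade st (u1, t1)) (L.erase (u1, t1)).toList).sup s
                    = (trade st (u1, t1)).sup s := by
                  apply run_sup_starved _ _ (hnn.trade _) u1 s hdem0
                  intro p hp hp2
                  have hpL : p ∈ L := (Finset.erase_subset _ _) (Finset.mem_toList.mp hp)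
                  have hbp : (p.1, s) ∈ L := by rw [← hp2, Prod.mk.eta]; exact hpL
                  exact hX2e p.1 hbp
                rw [hfin, trade_sup_ne' _ _ _ (Ne.symm hts)] at hzero
                exact absurd hzero (ne_of_gt hδ)
            · -- CASE (b)
              push_neg at hY0e
              obtain ⟨y0, hy0, hy0t⟩ := hY0e
              have hy0s : y0 ≠ s := by rintro rfl; exact hbs hy0
              -- (b1)
              have hne1 : ((u1 : B), s) ≠ (u1, t1) := by
                intro he; exact hts (congrArg Prod.snd he).symm
              have hperm1 := perm_cons_cons hut1 hus hne1
              have hzero1 := (hgood _ hperm1).2 s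
              rw [runSession_cons, runSession_cons] at hzero1
              have e3 : (trade (trade st (u1, t1)) (u1, s)).sup s
                  = max 0 (st.sup s - max 0 (st.dem u1 - st.sup t1)) := by
                rw [trade_sup_self', trade_dem_self', trade_sup_ne' _ _ _ (Ne.symm hts)]
              have hfin1 : (runSession (trade (trade st (u1, t1)) (u1, s))
                    (((L.erase (u1, t1)).erase (u1, s)).toList)).sup s
                  = (trade (trade st (u1, t1)) (u1, s)).sup s := by
                apply run_sup_untouched
                intro p hp
                have hp' := Finset.mem_toList.mp hp
                have hpe2 : p ≠ (u1, s) := (Finset.mem_erase.mp hp').1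
                have hpL : p ∈ L :=
                  (Finset.erase_subset _ _) ((Finset.erase_subset _ _) hp')
                intro hp2
                have hbp : (p.1, s) ∈ L := by rw [← hp2, Prod.mk.eta]; exact hpL
                have hh := hX2e p.1 hbp
                exact hpe2 (by rw [← hh, ← hp2, Prod.mk.eta])
              rw [hfin1, e3] at hzero1
              have hineq1 : st.sup s + st.sup t1 ≤ st.dem u1 := aux_ineq1 hδ hzero1
              -- (b2)
              have hne2 : ((u1 : B), t1) ≠ (u1, s) := by
                intro he; exact hts (congrArg Prod.snd he)
              have hperm2 := perm_cons_cons hus hut1 hne2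
              have hzero2 := (hgood _ hperm2).1 u1
              rw [runSession_cons, runSession_cons] at hzero2
              have f3 : (trade (trade st (u1, s)) (u1, t1)).dem u1
                  = max 0 (max 0 (st.dem u1 - st.sup s) - st.sup t1) := by
                rw [trade_dem_self', trade_dem_self', trade_sup_ne' _ _ _ hts]
              have hfin2 : (runSession (trade (trade st (u1, s)) (u1, t1))
                    (((L.erase (u1, s)).erase (u1, t1)).toList)).dem u1
                  = (trade (trade st (u1, s)) (u1, t1)).dem u1 := by
                apply run_dem_untouched
                intro p hp
                have hp' := Finset.mem_toList.mp hp
                have hpe2 : p ≠ (u1, t1) := (Finset.mem_erase.mp hp').1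
                have hpe1 : p ≠ (u1, s) :=
                  (Finset.mem_erase.mp ((Finset.mem_erase.mp hp').2)).1
                have hpL : p ∈ L :=
                  (Finset.erase_subset _ _) ((Finset.erase_subset _ _) hp')
                intro hp1
                have hbp : (u1, p.2) ∈ L := by rw [← hp1, Prod.mk.eta]; exact hpL
                rcases hY1 p.2 hbp with h | h
                · exact hpe2 (by rw [← hp1, ← h, Prod.mk.eta])
                · exact hpe1 (by rw [← hp1, ← h, Prod.mk.eta])
              rw [hfin2, f3] at hzero2
              have hineq2 : st.dem u1 ≤ st.sup s + st.sup t1 := aux_ineq2 hzero2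
              -- balance bookkeeping
              set Y0f := ((L.filter (fun p => p.1 = b)).image Prod.snd).erase t1 with hY0f
              have hUb : L.image Prod.fst = insert b {u1} := by
                apply Finset.ext
                intro x
                constructor
                · intro hx
                  obtain ⟨p, hpL, rfl⟩ := Finset.mem_image.mp hx
                  rcases hINC p hpL with h | h | h | h
                  · rw [h]; exact Finset.mem_insert_self _ _
                  · rw [h]; exact Finset.mem_insert.mpr (Or.inr (Finset.mem_singleton_self _))
                  · rcases hX1 p.1 (by rw [← h, Prod.mk.eta]; exact hpL) with h' | h'
                    · rw [h']; exact Finset.mem_insert_self _ _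
                    · rw [h']; exact Finset.mem_insert.mpr (Or.inr (Finset.mem_singleton_self _))
                  · have hh := hX2e p.1 (by rw [← h, Prod.mk.eta]; exact hpL)
                    rw [hh]; exact Finset.mem_insert.mpr (Or.inr (Finset.mem_singleton_self _))
                · intro hx
                  rcases Finset.mem_insert.mp hx with h | hx
                  · exact Finset.mem_image.mpr ⟨(b, t1), hbt1, h.symm⟩
                  · exact Finset.mem_image.mpr ⟨(u1, t1), hut1, (Finset.mem_singleton.mp hx).symm⟩
              have hVb : L.image Prod.snd = insert t1 (insert s Y0f) := by
                apply Finset.ext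
                intro y
                constructor
                · intro hy
                  obtain ⟨p, hpL, rfl⟩ := Finset.mem_image.mp hy
                  rcases hINC p hpL with h | h | h | h
                  · by_cases hyt : p.2 = t1
                    · rw [hyt]; exact Finset.mem_insert_self _ _
                    · refine Finset.mem_insert.mpr (Or.inr (Finset.mem_insert.mpr (Or.inr ?_)))
                      refine Finset.mem_erase.mpr ⟨hyt, ?_⟩
                      exact Finset.mem_image.mpr ⟨p, Finset.mem_filter.mpr ⟨hpL, h⟩, rfl⟩
                  · rcases hY1 p.2 (by rw [← h, Prod.mk.eta]; exact hpL) with h' | h'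
                    · rw [h']; exact Finset.mem_insert_self _ _
                    · rw [h']; exact Finset.mem_insert.mpr (Or.inr (Finset.mem_insert_self _ _))
                  · rw [h]; exact Finset.mem_insert_self _ _
                  · rw [h]; exact Finset.mem_insert.mpr (Or.inr (Finset.mem_insert_self _ _))
                · intro hy
                  rcases Finset.mem_insert.mp hy with h | hy
                  · exact Finset.mem_image.mpr ⟨(b, t1), hbt1, h.symm⟩
                  · rcases Finset.mem_insert.mp hy with h | hy
                    · exact Finset.mem_image.mpr ⟨(u1, s), hus, h.symm⟩
                    · obtain ⟨hyt, hy2⟩ := Finset.mem_erase.mp hy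
                      obtain ⟨p, hp, hpe⟩ := Finset.mem_image.mp hy2
                      exact Finset.mem_image.mpr ⟨p, (Finset.mem_filter.mp hp).1, hpe⟩
              have hbn : b ∉ ({u1} : Finset B) := by
                rw [Finset.mem_singleton]; exact hbu
              have ht1n : t1 ∉ insert s Y0f := by
                intro hc
                rcases Finset.mem_insert.mp hc with h | h
                · exact hts h
                · exact (Finset.mem_erase.mp h).1 rfl
              have hsn : s ∉ Y0f := by
                intro hc
                obtain ⟨p, hp, hp2⟩ := Finset.mem_image.mp (Finset.mem_erase.mp hc).2
                obtain ⟨hpL, hp1⟩ := Finset.mem_filter.mp hp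
                apply hbs
                rw [← hp1, ← hp2, Prod.mk.eta]; exact hpL
              rw [hUb, hVb, Finset.sum_insert hbn, Finset.sum_singleton,
                Finset.sum_insert ht1n, Finset.sum_insert hsn] at hbal
              have hsum : ∑ y ∈ Y0f, st.sup y = st.dem b := by linarith
              have hW3' : ∀ y ∈ Y0f, st.dem b ≤ st.sup y := by
                intro y hy
                obtain ⟨hyt, hy2⟩ := Finset.mem_erase.mp hy
                obtain ⟨p, hp, hp2⟩ := Finset.mem_image.mp hy2
                obtain ⟨hpL, hp1⟩ := Finset.mem_filter.mp hp
                have hby : (b, y) ∈ L := by rw [← hp1, ← hp2, Prod.mk.eta]; exact hpL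
                exact hW3 y hby hyt
              have hy0f : y0 ∈ Y0f := by
                refine Finset.mem_erase.mpr ⟨hy0t, ?_⟩
                exact Finset.mem_image.mpr ⟨(b, y0), Finset.mem_filter.mpr ⟨hy0, rfl⟩, rfl⟩
              have hy0val : st.sup y0 = st.dem b := by
                have huniq : ∀ y ∈ Y0f, y = y0 := by
                  intro y hy
                  by_contra hne
                  have hsub : {y, y0} ⊆ Y0f := by
                    intro z hz
                    rcases Finset.mem_insert.mp hz with h | hz
                    · rw [h]; exact hy
                    · rw [Finset.mem_singleton.mp hz]; exact hy0f
                  have hle : ∑ z ∈ ({y, y0} : Finset S), st.sup z ≤ ∑ z ∈ Y0f, st.sup z :=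
                    Finset.sum_le_sum_of_subset_of_nonneg hsub (fun z _ _ => hnn.2 z)
                  rw [Finset.sum_pair hne, hsum] at hle
                  have h1 := hW3' y hy
                  have h2 := hW3' y0 hy0f
                  linarith
                have hY0fs : Y0f = {y0} :=
                  Finset.eq_singleton_iff_unique_mem.mpr ⟨hy0f, huniq⟩
                rw [hY0fs, Finset.sum_singleton] at hsum
                exact hsum
              -- (b5)
              have hne3 : ((b : B), y0) ≠ (b, t1) := by
                intro he; exact hy0t (congrArg Prod.snd he)
              have hperm3 := perm_cons_cons hbt1 hy0 hne3
              have hzero3 := (hgood _ hperm3).2 y0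
              rw [runSession_cons, runSession_cons] at hzero3
              have g3 : (trade (trade st (b, t1)) (b, y0)).sup y0
                  = max 0 (st.dem b - max 0 (st.dem b - st.sup t1)) := by
                rw [trade_sup_self', trade_dem_self', trade_sup_ne' _ _ _ hy0t, hy0val]
              have hfin3 : (runSession (trade (trade st (b, t1)) (b, y0))
                    (((L.erase (b, t1)).erase (b, y0)).toList)).sup y0
                  = (trade (trade st (b, t1)) (b, y0)).sup y0 := by
                apply run_sup_untouched
                intro p hp
                have hp' := Finset.mem_toList.mp hp
                have hpe2 : p ≠ (b, y0) := (Finset.mem_erase.mp hp').1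
                have hpL : p ∈ L :=
                  (Finset.erase_subset _ _) ((Finset.erase_subset _ _) hp')
                intro hp2
                rcases hINC p hpL with h | h | h | h
                · exact hpe2 (by rw [← h, ← hp2, Prod.mk.eta])
                · have hup : (u1, p.2) ∈ L := by rw [← h, Prod.mk.eta]; exact hpL
                  rcases hY1 p.2 hup with h' | h'
                  · rw [hp2] at h'; exact hy0t h'
                  · rw [hp2] at h'; exact hy0s h'
                · rw [hp2] at h; exact hy0t h
                · rw [hp2] at h; exact hy0s h
              rw [hfin3, g3] at hzero3
              exact absurd hzero3 (ne_of_gt (aux_pos hα hγ))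
          · -- CASE (a)
            push_neg at hX2e
            obtain ⟨x2, hx2, hx2u⟩ := hX2e
            have hx2b : x2 ≠ b := by rintro rfl; exact hbs hx2
            have hY0e : ∀ y, (b, y) ∈ L → y = t1 := by
              intro y0 hy0
              by_contra hy0t
              have hy0s : y0 ≠ s := by rintro rfl; exact hbs hy0
              have huy0 : (u1, y0) ∈ L := by
                refine red (x2, s) hx2 u1 y0 (reach3 (t := t1) (u := b) ?_ ?_ ?_)
                · exact memL' (x2, s) (u1, t1) hut1 (Ne.symm hx2u) hts
                · exact memL' (x2, s) (b, t1) hbt1 (Ne.symm hx2b) hts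
                · exact memL' (x2, s) (b, y0) hy0 (Ne.symm hx2b) hy0s
              rcases hY1 y0 huy0 with h | h
              · exact hy0t h
              · exact hy0s h
            -- (a1)
            have hne1 : ((b : B), t1) ≠ (u1, t1) := by
              intro he; exact hbu (congrArg Prod.fst he)
            have hperm1 := perm_cons_cons hut1 hbt1 hne1
            have hzero1 := (hgood _ hperm1).1 b
            rw [runSession_cons, runSession_cons] at hzero1
            have e3 : (trade (trade st (u1, t1)) (b, t1)).dem b
                = max 0 (st.dem b - max 0 (st.sup t1 - st.dem u1)) := by
              rw [trade_dem_self', trade_sup_self', trade_dem_ne' _ _ _ hbu]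
            have hfin1 : (runSession (trade (trade st (u1, t1)) (b, t1))
                  (((L.erase (u1, t1)).erase (b, t1)).toList)).dem b
                = (trade (trade st (u1, t1)) (b, t1)).dem b := by
              apply run_dem_untouched
              intro p hp
              have hp' := Finset.mem_toList.mp hp
              have hpe2 : p ≠ (b, t1) := (Finset.mem_erase.mp hp').1
              have hpL : p ∈ L :=
                (Finset.erase_subset _ _) ((Finset.erase_subset _ _) hp')
              intro hp1
              have hbp : (b, p.2) ∈ L := by rw [← hp1, Prod.mk.eta]; exact hpL
              have hh := hY0e p.2 hbp
              exact hpe2 (by rw [← hp1, ← hh, Prod.mk.eta])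
            rw [hfin1, e3] at hzero1
            have hineq1 : st.dem b + st.dem u1 ≤ st.sup t1 := aux_ineq1 hα hzero1
            -- (a2)
            have hne2 : ((u1 : B), t1) ≠ (b, t1) := by
              intro he; exact hbu (congrArg Prod.fst he).symm
            have hperm2 := perm_cons_cons hbt1 hut1 hne2
            have hzero2 := (hgood _ hperm2).2 t1
            rw [runSession_cons, runSession_cons] at hzero2
            have f3 : (trade (trade st (b, t1)) (u1, t1)).sup t1
                = max 0 (max 0 (st.sup t1 - st.dem b) - st.dem u1) := by
              rw [trade_sup_self', trade_sup_self', trade_dem_ne' _ _ _ (Ne.symm hbu)]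
            have hfin2 : (runSession (trade (trade st (b, t1)) (u1, t1))
                  (((L.erase (b, t1)).erase (u1, t1)).toList)).sup t1
                = (trade (trade st (b, t1)) (u1, t1)).sup t1 := by
              apply run_sup_untouched
              intro p hp
              have hp' := Finset.mem_toList.mp hp
              have hpe2 : p ≠ (u1, t1) := (Finset.mem_erase.mp hp').1
              have hpe1 : p ≠ (b, t1) :=
                (Finset.mem_erase.mp ((Finset.mem_erase.mp hp').2)).1
              have hpL : p ∈ L :=
                (Finset.erase_subset _ _) ((Finset.erase_subset _ _) hp')
              intro hp2
              have hbp : (p.1, t1) ∈ L := by rw [← hp2, Prod.mk.eta]; exact hpL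
              rcases hX1 p.1 hbp with h | h
              · exact hpe1 (by rw [← h, ← hp2, Prod.mk.eta])
              · exact hpe2 (by rw [← h, ← hp2, Prod.mk.eta])
            rw [hfin2, f3] at hzero2
            have hineq2 : st.sup t1 ≤ st.dem b + st.dem u1 := aux_ineq2 hzero2
            -- balance bookkeeping
            set X2f := ((L.filter (fun p => p.2 = s)).image Prod.fst).erase u1 with hX2f
            have hUa : L.image Prod.fst = insert b (insert u1 X2f) := by
              apply Finset.ext
              intro x
              constructor
              · intro hx
                obtain ⟨p, hpL, rfl⟩ := Finset.mem_image.mp hx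
                rcases hINC p hpL with h | h | h | h
                · rw [h]; exact Finset.mem_insert_self _ _
                · rw [h]; exact Finset.mem_insert.mpr (Or.inr (Finset.mem_insert_self _ _))
                · rcases hX1 p.1 (by rw [← h, Prod.mk.eta]; exact hpL) with h' | h'
                  · rw [h']; exact Finset.mem_insert_self _ _
                  · rw [h']; exact Finset.mem_insert.mpr (Or.inr (Finset.mem_insert_self _ _))
                · by_cases hpu : p.1 = u1
                  · rw [hpu]; exact Finset.mem_insert.mpr (Or.inr (Finset.mem_insert_self _ _))
                  · refine Finset.mem_insert.mpr (Or.inr (Finset.mem_insert.mpr (Or.inr ?_)))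
                    refine Finset.mem_erase.mpr ⟨hpu, ?_⟩
                    exact Finset.mem_image.mpr ⟨p, Finset.mem_filter.mpr ⟨hpL, h⟩, rfl⟩
              · intro hx
                rcases Finset.mem_insert.mp hx with h | hx
                · exact Finset.mem_image.mpr ⟨(b, t1), hbt1, h.symm⟩
                · rcases Finset.mem_insert.mp hx with h | hx
                  · exact Finset.mem_image.mpr ⟨(u1, t1), hut1, h.symm⟩
                  · obtain ⟨hxu, hx2'⟩ := Finset.mem_erase.mp hx
                    obtain ⟨p, hp, hpe⟩ := Finset.mem_image.mp hx2'
                    exact Finset.mem_image.mpr ⟨p, (Finset.mem_filter.mp hp).1, hpe⟩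
            have hVa : L.image Prod.snd = insert t1 {s} := by
              apply Finset.ext
              intro y
              constructor
              · intro hy
                obtain ⟨p, hpL, rfl⟩ := Finset.mem_image.mp hy
                rcases hINC p hpL with h | h | h | h
                · have hh := hY0e p.2 (by rw [← h, Prod.mk.eta]; exact hpL)
                  rw [hh]; exact Finset.mem_insert_self _ _
                · rcases hY1 p.2 (by rw [← h, Prod.mk.eta]; exact hpL) with h' | h'
                  · rw [h']; exact Finset.mem_insert_self _ _
                  · rw [h']; exact Finset.mem_insert.mpr (Or.inr (Finset.mem_singleton_self _))
                · rw [h]; exact Finset.mem_insert_self _ _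
                · rw [h]; exact Finset.mem_insert.mpr (Or.inr (Finset.mem_singleton_self _))
              · intro hy
                rcases Finset.mem_insert.mp hy with h | hy
                · exact Finset.mem_image.mpr ⟨(b, t1), hbt1, h.symm⟩
                · exact Finset.mem_image.mpr ⟨(u1, s), hus, (Finset.mem_singleton.mp hy).symm⟩
            have hbn : b ∉ insert u1 X2f := by
              intro hc
              rcases Finset.mem_insert.mp hc with h | h
              · exact hbu h
              · obtain ⟨p, hp, hp1⟩ := Finset.mem_image.mp (Finset.mem_erase.mp h).2
                obtain ⟨hpL, hp2⟩ := Finset.mem_filter.mp hp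
                apply hbs
                rw [← hp1, ← hp2, Prod.mk.eta]; exact hpL
            have hun : u1 ∉ X2f := Finset.notMem_erase _ _
            have ht1n : t1 ∉ ({s} : Finset S) := by
              rw [Finset.mem_singleton]; exact hts
            rw [hUa, hVa, Finset.sum_insert hbn, Finset.sum_insert hun,
              Finset.sum_insert ht1n, Finset.sum_singleton] at hbal
            have hsum : ∑ x ∈ X2f, st.dem x = st.sup s := by linarith
            have hW2' : ∀ x ∈ X2f, st.sup s ≤ st.dem x := by
              intro x hx
              obtain ⟨hxu, hx2'⟩ := Finset.mem_erase.mp hx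
              obtain ⟨p, hp, hp1⟩ := Finset.mem_image.mp hx2'
              obtain ⟨hpL, hp2⟩ := Finset.mem_filter.mp hp
              have hxs : (x, s) ∈ L := by rw [← hp1, ← hp2, Prod.mk.eta]; exact hpL
              exact hW2 x hxs hxu
            have hx2f : x2 ∈ X2f := by
              refine Finset.mem_erase.mpr ⟨hx2u, ?_⟩
              exact Finset.mem_image.mpr ⟨(x2, s), Finset.mem_filter.mpr ⟨hx2, rfl⟩, rfl⟩
            have hx2val : st.dem x2 = st.sup s := by
              have huniq : ∀ x ∈ X2f, x = x2 := by
                intro x hx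
                by_contra hne
                have hsub : {x, x2} ⊆ X2f := by
                  intro z hz
                  rcases Finset.mem_insert.mp hz with h | hz
                  · rw [h]; exact hx
                  · rw [Finset.mem_singleton.mp hz]; exact hx2f
                have hle : ∑ z ∈ ({x, x2} : Finset B), st.dem z ≤ ∑ z ∈ X2f, st.dem z :=
                  Finset.sum_le_sum_of_subset_of_nonneg hsub (fun z _ _ => hnn.1 z)
                rw [Finset.sum_pair hne, hsum] at hle
                have h1 := hW2' x hx
                have h2 := hW2' x2 hx2f
                linarith
              have hX2fs : X2f = {x2} :=
                Finset.eq_singleton_iff_unique_mem.mpr ⟨hx2f, huniq⟩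
              rw [hX2fs, Finset.sum_singleton] at hsum
              exact hsum
            -- (a5)
            have hneA : ((x2 : B), s) ≠ (u1, s) := by
              intro he; exact hx2u (congrArg Prod.fst he)
            have hpermA := perm_cons_cons hus hx2 hneA
            have hzeroA := (hgood _ hpermA).1 x2
            rw [runSession_cons, runSession_cons] at hzeroA
            have g3 : (trade (trade st (u1, s)) (x2, s)).dem x2
                = max 0 (st.sup s - max 0 (st.sup s - st.dem u1)) := by
              rw [trade_dem_self', trade_sup_self', trade_dem_ne' _ _ _ hx2u, hx2val]
            have hfinA : (runSession (trade (trade st (u1, s)) (x2, s))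
                  (((L.erase (u1, s)).erase (x2, s)).toList)).dem x2
                = (trade (trade st (u1, s)) (x2, s)).dem x2 := by
              apply run_dem_untouched
              intro p hp
              have hp' := Finset.mem_toList.mp hp
              have hpe2 : p ≠ (x2, s) := (Finset.mem_erase.mp hp').1
              have hpL : p ∈ L :=
                (Finset.erase_subset _ _) ((Finset.erase_subset _ _) hp')
              intro hp1
              rcases hINC p hpL with h | h | h | h
              · apply hx2b; rw [← hp1]; exact h
              · apply hx2u; rw [← hp1]; exact h
              · have hpt : (p.1, t1) ∈ L := by rw [← h, Prod.mk.eta]; exact hpL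
                rcases hX1 p.1 hpt with h' | h'
                · apply hx2b; rw [← hp1]; exact h'
                · apply hx2u; rw [← hp1]; exact h'
              · exact hpe2 (by rw [← hp1, ← h, Prod.mk.eta])
            rw [hfinA, g3] at hzeroA
            exact absurd hzeroA (ne_of_gt (aux_pos hδ hβ))

end Main

/-- Main theorem: with strictly positive demands and supplies and component-wise
supply equal to demand, every trading session is feasible iff every connected
component is complete bipartite. -/
theorem stmt_6 {B S : Type*} [Fintype B] [Fintype S] [DecidableEq B] [DecidableEq S]
    (L : Finset (B × S)) (D : B → ℝ) (Sup : S → ℝ)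
    (hD : ∀ b, 0 < D b) (hS : ∀ s, 0 < Sup s)
    (hbal : ∀ v : B ⊕ S,
      ∑ b ∈ Finset.univ.filter (fun b => (linkGraph L).Reachable v (Sum.inl b)), D b
        = ∑ s ∈ Finset.univ.filter (fun s => (linkGraph L).Reachable v (Sum.inr s)), Sup s) :
    (∀ seq : List (B × S), seq.Perm L.toList →
        ∀ b, (runSession ⟨D, Sup⟩ seq).dem b = 0)
      ↔ (∀ b s, (linkGraph L).Reachable (Sum.inl b) (Sum.inr s) → (b, s) ∈ L) := by
  have hnn : Nst (⟨D, Sup⟩ : TState B S) := ⟨fun b => (hD b).le, fun s => (hS s).le⟩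
  constructor
  · intro hgood0 b s hreach
    have hgood : goodP L (⟨D, Sup⟩ : TState B S) := by
      intro seq hperm
      refine ⟨hgood0 seq hperm, ?_⟩
      intro s0
      have hclos : ∀ p ∈ seq,
          (p.1 ∈ Finset.univ.filter
              (fun x => (linkGraph L).Reachable (Sum.inr s0) (Sum.inl x)) ↔
           p.2 ∈ Finset.univ.filter
              (fun y => (linkGraph L).Reachable (Sum.inr s0) (Sum.inr y))) := by
        intro p hp
        have hpL : p ∈ L := Finset.mem_toList.mp ((hperm.mem_iff).mp hp)
        have hadj := adj_of_mem hpL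
        constructor
        · intro h1
          refine Finset.mem_filter.mpr ⟨Finset.mem_univ _, ?_⟩
          exact ((Finset.mem_filter.mp h1).2).trans hadj.reachable
        · intro h1
          refine Finset.mem_filter.mpr ⟨Finset.mem_univ _, ?_⟩
          exact ((Finset.mem_filter.mp h1).2).trans hadj.symm.reachable
      have hinv := invariant _ _ seq (⟨D, Sup⟩ : TState B S) hclos
      have h0 : (∑ x ∈ Finset.univ.filter
              (fun x => (linkGraph L).Reachable (Sum.inr s0) (Sum.inl x)),
            (⟨D, Sup⟩ : TState B S).dem x)
          - ∑ y ∈ Finset.univ.filter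
              (fun y => (linkGraph L).Reachable (Sum.inr s0) (Sum.inr y)),
            (⟨D, Sup⟩ : TState B S).sup y = 0 :=
        sub_eq_zero_of_eq (hbal (Sum.inr s0))
      rw [h0] at hinv
      have hUzero : ∑ x ∈ Finset.univ.filter
            (fun x => (linkGraph L).Reachable (Sum.inr s0) (Sum.inl x)),
          (runSession (⟨D, Sup⟩ : TState B S) seq).dem x = 0 :=
        Finset.sum_eq_zero (fun x _ => hgood0 seq hperm x)
      rw [hUzero] at hinv
      have hVzero : ∑ y ∈ Finset.univ.filter
            (fun y => (linkGraph L).Reachable (Sum.inr s0) (Sum.inr y)),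
          (runSession (⟨D, Sup⟩ : TState B S) seq).sup y = 0 := by linarith
      have hy := (Finset.sum_eq_zero_iff_of_nonneg
        (fun y _ => (hnn.run seq).2 y)).mp hVzero
      exact hy s0 (Finset.mem_filter.mpr ⟨Finset.mem_univ _, SimpleGraph.Reachable.refl _⟩)
    exact Qmain L.card L (⟨D, Sup⟩ : TState B S) le_rfl hnn
      (fun p _ => ⟨hD p.1, hS p.2⟩) hgood b s hreach
  · intro hcomp seq hperm b0
    by_contra h0
    have hpos0 : 0 < (runSession (⟨D, Sup⟩ : TState B S) seq).dem b0 :=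
      lt_of_le_of_ne ((hnn.run seq).1 b0) (Ne.symm h0)
    have hclos : ∀ p ∈ seq,
        (p.1 ∈ Finset.univ.filter
            (fun x => (linkGraph L).Reachable (Sum.inl b0) (Sum.inl x)) ↔
         p.2 ∈ Finset.univ.filter
            (fun y => (linkGraph L).Reachable (Sum.inl b0) (Sum.inr y))) := by
      intro p hp
      have hpL : p ∈ L := Finset.mem_toList.mp ((hperm.mem_iff).mp hp)
      have hadj := adj_of_mem hpL
      constructor
      · intro h1
        refine Finset.mem_filter.mpr ⟨Finset.mem_univ _, ?_⟩
        exact ((Finset.mem_filter.mp h1).2).trans hadj.reachable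
      · intro h1
        refine Finset.mem_filter.mpr ⟨Finset.mem_univ _, ?_⟩
        exact ((Finset.mem_filter.mp h1).2).trans hadj.symm.reachable
    have hinv := invariant _ _ seq (⟨D, Sup⟩ : TState B S) hclos
    have h0' : (∑ x ∈ Finset.univ.filter
            (fun x => (linkGraph L).Reachable (Sum.inl b0) (Sum.inl x)),
          (⟨D, Sup⟩ : TState B S).dem x)
        - ∑ y ∈ Finset.univ.filter
            (fun y => (linkGraph L).Reachable (Sum.inl b0) (Sum.inr y)),
          (⟨D, Sup⟩ : TState B S).sup y = 0 :=
      sub_eq_zero_of_eq (hbal (Sum.inl b0))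
    rw [h0'] at hinv
    have hVzero : ∑ y ∈ Finset.univ.filter
          (fun y => (linkGraph L).Reachable (Sum.inl b0) (Sum.inr y)),
        (runSession (⟨D, Sup⟩ : TState B S) seq).sup y = 0 := by
      apply Finset.sum_eq_zero
      intro y hy
      have hreach : (linkGraph L).Reachable (Sum.inl b0) (Sum.inr y) :=
        (Finset.mem_filter.mp hy).2
      have hmem : (b0, y) ∈ L := hcomp b0 y hreach
      have hseq : (b0, y) ∈ seq := (hperm.mem_iff).mpr (Finset.mem_toList.mpr hmem)
      rcases min_zero_mem seq (⟨D, Sup⟩ : TState B S) hnn hseq with h | h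
      · exact absurd h (ne_of_gt hpos0)
      · exact h
    rw [hVzero] at hinv
    have hUzero : ∑ x ∈ Finset.univ.filter
          (fun x => (linkGraph L).Reachable (Sum.inl b0) (Sum.inl x)),
        (runSession (⟨D, Sup⟩ : TState B S) seq).dem x = 0 := by linarith
    have hUall := (Finset.sum_eq_zero_iff_of_nonneg
      (fun x _ => (hnn.run seq).1 x)).mp hUzero
    exact h0 (hUall b0
      (Finset.mem_filter.mpr ⟨Finset.mem_univ _, SimpleGraph.Reachable.refl _⟩))
end

section
/- Let B, S be finite sets with D : B → ℝ≥0, Sup : S → ℝ≥0, l : B × S → {0,1}. If the bipartite graph induced by l restricted to each connected component satisfies ∑_{i ∈ comp} D_i ≤ ∑_{j ∈ comp} Sup_j, and every connected component is complete bipartite, then the constraint system t_{ij} ≥ 0, t_{ij} = 0 when l_{ij} = 0, ∑_j t_{ij} = D_i for all i, ∑_i t_{ij} ≤ Sup_j for all j, has a solution. -/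
open scoped Classical

/-- Sufficiency for the feasibility LP: if on every connected component total
demand is at most total supply and every connected component is complete
bipartite, then the feasibility constraint system has a solution. -/
theorem stmt_12 {B S : Type*} [Fintype B] [Fintype S]
    (D : B → ℝ) (Sup : S → ℝ) (l : B → S → Bool)
    (hD : ∀ i, 0 ≤ D i) (hS : ∀ j, 0 ≤ Sup j)
    (L : Finset (B × S)) (hL : L = Finset.univ.filter (fun p : B × S => l p.1 p.2))
    (hbal : ∀ v : B ⊕ S,
      ∑ i ∈ Finset.univ.filter (fun i => (linkGraph L).Reachable v (Sum.inl i)), D i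
        ≤ ∑ j ∈ Finset.univ.filter (fun j => (linkGraph L).Reachable v (Sum.inr j)), Sup j)
    (hcb : ∀ i j, (linkGraph L).Reachable (Sum.inl i) (Sum.inr j) → l i j = true) :
    ∃ t : B → S → ℝ,
      (∀ i j, 0 ≤ t i j) ∧
      (∀ i j, l i j = false → t i j = 0) ∧
      (∀ i, ∑ j, t i j = D i) ∧
      (∀ j, ∑ i, t i j ≤ Sup j) := by
  classical
  set G := linkGraph L with hG
  -- total supply reachable from a vertex
  set T : (B ⊕ S) → ℝ :=
    fun v => ∑ j ∈ Finset.univ.filter (fun j => G.Reachable v (Sum.inr j)), Sup j with hT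
  have hTnonneg : ∀ v, 0 ≤ T v :=
    fun v => Finset.sum_nonneg (fun j _ => hS j)
  have hTeq : ∀ v w, G.Reachable v w → T v = T w := by
    intro v w hvw
    apply Finset.sum_congr _ (fun _ _ => rfl)
    ext j
    simp only [Finset.mem_filter, Finset.mem_univ, true_and]
    exact ⟨fun h => hvw.symm.trans h, fun h => hvw.trans h⟩
  have hDT : ∀ i, D i ≤ T (Sum.inl i) := by
    intro i
    refine le_trans ?_ (hbal (Sum.inl i))
    apply Finset.single_le_sum (fun i' _ => hD i')
    exact Finset.mem_filter.2 ⟨Finset.mem_univ i, SimpleGraph.Reachable.refl _⟩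
  set t : B → S → ℝ :=
    fun i j => if G.Reachable (Sum.inl i) (Sum.inr j) then
      D i * Sup j / T (Sum.inl i) else 0 with ht
  refine ⟨t, ?_, ?_, ?_, ?_⟩
  · intro i j
    simp only [ht]
    split
    · exact div_nonneg (mul_nonneg (hD i) (hS j)) (hTnonneg _)
    · exact le_refl 0
  · intro i j hlf
    simp only [ht]
    rw [if_neg]
    intro hr
    have := hcb i j hr
    rw [hlf] at this
    exact absurd this (by simp)
  · intro i
    have : ∑ j, t i j
        = ∑ j ∈ Finset.univ.filter (fun j => G.Reachable (Sum.inl i) (Sum.inr j)),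
            D i * Sup j / T (Sum.inl i) := by
      rw [Finset.sum_filter]
    rw [this]
    have hsum : ∑ j ∈ Finset.univ.filter (fun j => G.Reachable (Sum.inl i) (Sum.inr j)),
        D i * Sup j / T (Sum.inl i) = D i / T (Sum.inl i) * T (Sum.inl i) := by
      rw [Finset.mul_sum]
      apply Finset.sum_congr rfl
      intro j _
      ring
    rw [hsum]
    rcases eq_or_lt_of_le (hTnonneg (Sum.inl i)) with hT0 | hTpos
    · have hD0 : D i = 0 := le_antisymm ((hDT i).trans hT0.ge) (hD i)
      simp [hD0]
    · rw [div_mul_cancel₀ _ (ne_of_gt hTpos)]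
  · intro j
    have : ∑ i, t i j
        = ∑ i ∈ Finset.univ.filter (fun i => G.Reachable (Sum.inr j) (Sum.inl i)),
            D i * (Sup j / T (Sum.inr j)) := by
      rw [Finset.sum_filter]
      apply Finset.sum_congr rfl
      intro i _
      simp only [ht]
      by_cases hr : G.Reachable (Sum.inl i) (Sum.inr j)
      · rw [if_pos hr, if_pos hr.symm, hTeq _ _ hr]
        ring
      · rw [if_neg hr, if_neg (fun h => hr h.symm)]
    rw [this, ← Finset.sum_mul]
    have hq : 0 ≤ Sup j / T (Sum.inr j) := div_nonneg (hS j) (hTnonneg _)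
    rcases eq_or_lt_of_le (hTnonneg (Sum.inr j)) with hT0 | hTpos
    · rw [← hT0, div_zero, mul_zero]
      exact hS j
    · calc (∑ i ∈ Finset.univ.filter (fun i => G.Reachable (Sum.inr j) (Sum.inl i)), D i)
            * (Sup j / T (Sum.inr j))
          ≤ T (Sum.inr j) * (Sup j / T (Sum.inr j)) :=
            mul_le_mul_of_nonneg_right (hbal (Sum.inr j)) hq
      _ = Sup j := by
            rw [mul_div_assoc']
            exact mul_div_cancel_left₀ _ (ne_of_gt hTpos)
end

section
/- Let the bipartite graph consist of components each complete bipartite with component-wise supply equal to demand, all demands and supplies nonnegative. Then after any prefix of any trading session, within each component the remaining total supply equals the remaining total demand, and if some buyer in a component has positive remaining demand then some seller in that component has positive remaining supply and is linked to that buyer. -/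
open scoped Classical

lemma max_sub_helper (a b : ℝ) : max 0 (a - b) - a = max 0 (b - a) - b := by
  rcases le_total a b with h | h
  · rw [max_eq_left (by linarith), max_eq_right (by linarith)]; linarith
  · rw [max_eq_right (by linarith), max_eq_left (by linarith)]; linarith

lemma aux_inv {B S : Type*} [Fintype B] [Fintype S] [DecidableEq B] [DecidableEq S]
    (L : Finset (B × S)) :
    ∀ (seq : List (B × S)) (D : B → ℝ) (Sup : S → ℝ),
      (∀ p ∈ seq, p ∈ L) → (∀ b, 0 ≤ D b) → (∀ s, 0 ≤ Sup s) →
      (∀ v : B ⊕ S,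
        ∑ b ∈ Finset.univ.filter (fun b => (linkGraph L).Reachable v (Sum.inl b)), D b
          = ∑ s ∈ Finset.univ.filter (fun s => (linkGraph L).Reachable v (Sum.inr s)), Sup s) →
      (∀ b, 0 ≤ (runSession ⟨D, Sup⟩ seq).dem b) ∧
      (∀ s, 0 ≤ (runSession ⟨D, Sup⟩ seq).sup s) ∧
      (∀ v : B ⊕ S,
        ∑ b ∈ Finset.univ.filter (fun b => (linkGraph L).Reachable v (Sum.inl b)),
            (runSession ⟨D, Sup⟩ seq).dem b
          = ∑ s ∈ Finset.univ.filter (fun s => (linkGraph L).Reachable v (Sum.inr s)),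
              (runSession ⟨D, Sup⟩ seq).sup s) := by
  intro seq
  induction seq with
  | nil => intro D Sup _ hD hS hbal; exact ⟨hD, hS, hbal⟩
  | cons l tl ih =>
    intro D Sup hsub hD hS hbal
    have hl : l ∈ L := hsub l List.mem_cons_self
    have hrun : runSession ⟨D, Sup⟩ (l :: tl) = runSession (trade ⟨D, Sup⟩ l) tl := rfl
    rw [hrun]
    have htr : trade (⟨D, Sup⟩ : TState B S) l =
        ⟨Function.update D l.1 (max 0 (D l.1 - Sup l.2)),
         Function.update Sup l.2 (max 0 (Sup l.2 - D l.1))⟩ := rfl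
    rw [htr]
    apply ih
    · intro p hp; exact hsub p (List.mem_cons_of_mem _ hp)
    · intro b
      rcases eq_or_ne b l.1 with rfl | hne
      · rw [Function.update_self]; exact le_max_left _ _
      · rw [Function.update_of_ne hne]; exact hD b
    · intro s
      rcases eq_or_ne s l.2 with rfl | hne
      · rw [Function.update_self]; exact le_max_left _ _
      · rw [Function.update_of_ne hne]; exact hS s
    · intro v
      have hadj : (linkGraph L).Adj (Sum.inl l.1) (Sum.inr l.2) :=
        ⟨l, hl, Or.inl ⟨rfl, rfl⟩⟩
      have key : (linkGraph L).Reachable v (Sum.inl l.1) ↔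
          (linkGraph L).Reachable v (Sum.inr l.2) :=
        ⟨fun h => h.trans hadj.reachable, fun h => h.trans hadj.symm.reachable⟩
      by_cases hv : (linkGraph L).Reachable v (Sum.inl l.1)
      · have hb0 : l.1 ∈ Finset.univ.filter
            (fun b => (linkGraph L).Reachable v (Sum.inl b)) := by
          simp [hv]
        have hs0 : l.2 ∈ Finset.univ.filter
            (fun s => (linkGraph L).Reachable v (Sum.inr s)) := by
          simp [key.mp hv]
        rw [Finset.sum_update_of_mem hb0, Finset.sum_update_of_mem hs0]
        simp only [← Finset.erase_eq]
        have h1 := Finset.add_sum_erase _ D hb0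
        have h2 := Finset.add_sum_erase _ Sup hs0
        have h3 := hbal v
        have h4 := max_sub_helper (D l.1) (Sup l.2)
        linarith
      · have e1 : ∀ b ∈ Finset.univ.filter
            (fun b => (linkGraph L).Reachable v (Sum.inl b)),
            Function.update D l.1 (max 0 (D l.1 - Sup l.2)) b = D b := by
          intro b hb
          apply Function.update_of_ne
          rintro rfl
          exact hv (Finset.mem_filter.mp hb).2
        have e2 : ∀ s ∈ Finset.univ.filter
            (fun s => (linkGraph L).Reachable v (Sum.inr s)),
            Function.update Sup l.2 (max 0 (Sup l.2 - D l.1)) s = Sup s := by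
          intro s hs
          apply Function.update_of_ne
          rintro rfl
          exact hv (key.mpr (Finset.mem_filter.mp hs).2)
        rw [Finset.sum_congr rfl e1, Finset.sum_congr rfl e2]
        exact hbal v

/-- Key invariant of the sufficiency proof: if every component is complete
bipartite with component-wise supply equal to demand, then after any prefix of
any trading session each component still has remaining supply equal to
remaining demand, and any buyer with positive remaining demand is linked to a
seller with positive remaining supply. -/
theorem stmt_14 {B S : Type*} [Fintype B] [Fintype S] [DecidableEq B] [DecidableEq S]
    (L : Finset (B × S)) (D : B → ℝ) (Sup : S → ℝ)
    (hD : ∀ b, 0 ≤ D b) (hS : ∀ s, 0 ≤ Sup s)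
    (hbal : ∀ v : B ⊕ S,
      ∑ b ∈ Finset.univ.filter (fun b => (linkGraph L).Reachable v (Sum.inl b)), D b
        = ∑ s ∈ Finset.univ.filter (fun s => (linkGraph L).Reachable v (Sum.inr s)), Sup s)
    (hcb : ∀ b s, (linkGraph L).Reachable (Sum.inl b) (Sum.inr s) → (b, s) ∈ L)
    (seq : List (B × S)) (hnd : seq.Nodup) (hsub : ∀ p ∈ seq, p ∈ L) :
    (∀ v : B ⊕ S,
      ∑ b ∈ Finset.univ.filter (fun b => (linkGraph L).Reachable v (Sum.inl b)),
          (runSession ⟨D, Sup⟩ seq).dem b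
        = ∑ s ∈ Finset.univ.filter (fun s => (linkGraph L).Reachable v (Sum.inr s)),
            (runSession ⟨D, Sup⟩ seq).sup s) ∧
    (∀ b, 0 < (runSession ⟨D, Sup⟩ seq).dem b →
      ∃ s, (b, s) ∈ L ∧ 0 < (runSession ⟨D, Sup⟩ seq).sup s) := by
  
  obtain ⟨hd, hs, hb⟩ := aux_inv L seq D Sup hsub hD hS hbal
  refine ⟨hb, fun b hbpos => ?_⟩
  have hbal' := hb (Sum.inl b)
  have hbmem : b ∈ Finset.univ.filter
      (fun b' => (linkGraph L).Reachable (Sum.inl b) (Sum.inl b')) := by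
    simp only [Finset.mem_filter, Finset.mem_univ, true_and]
    exact SimpleGraph.Reachable.refl _
  have hpos : 0 < ∑ s ∈ Finset.univ.filter
      (fun s => (linkGraph L).Reachable (Sum.inl b) (Sum.inr s)),
      (runSession ⟨D, Sup⟩ seq).sup s := by
    rw [← hbal']
    calc (0:ℝ) < (runSession ⟨D, Sup⟩ seq).dem b := hbpos
    _ ≤ _ := Finset.single_le_sum (fun i _ => hd i) hbmem
  by_contra hcon
  push_neg at hcon
  have hle : ∑ s ∈ Finset.univ.filter
      (fun s => (linkGraph L).Reachable (Sum.inl b) (Sum.inr s)),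
      (runSession ⟨D, Sup⟩ seq).sup s ≤ 0 := by
    apply Finset.sum_nonpos
    intro s hsm
    exact hcon s (hcb b s (Finset.mem_filter.mp hsm).2)
  linarith
end
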